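/- arXiv:1405.0856 — 2 statements merged into one kernel-verified Lean document; each statement's English description precedes it below -/
import Mathlib

section
/- Main theorem (ii): Under the standing assumptions, if Σβₙ < ∞, then the sequence x_{n+1} = αₙu + (1−αₙ)[βₙA_Txₙ + (1−βₙ)A_Sxₙ] converges strongly to P_{Fix(S)}u. -/
open Filter Topology RealInnerProductSpace

section helpers
variable {H : Type*} [NormedAddCommGroup H] [InnerProductSpace ℝ H]

lemma comb_sub (a b : ℝ) (hab : a + b = 1) (X Y q : H) :
    (a • X + b • Y) - q = a • (X - q) + b • (Y - q) := by
  rw [smul_sub, smul_sub]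
  rw [show a • X - a • q + (b • Y - b • q) = a • X + b • Y - (a+b) • q by rw [add_smul]; abel]
  rw [hab, one_smul]

lemma comb_sub' (a b : ℝ) (hab : a + b = 1) (X Y q : H) :
    q - (a • X + b • Y) = a • (q - X) + b • (q - Y) := by
  have h := comb_sub a b hab X Y q
  have : q - (a • X + b • Y) = -((a • X + b • Y) - q) := by abel
  rw [this, h, smul_sub, smul_sub, smul_sub, smul_sub]
  abel

lemma cvx_id (a b : ℝ) (hab : a + b = 1) (x y : H) :
    ‖a • x + b • y‖ ^ 2 = a * ‖x‖ ^ 2 + b * ‖y‖ ^ 2 - a * b * ‖x - y‖ ^ 2 := by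
  have h1 : ∀ v : H, ‖v‖ ^ 2 = ⟪v, v⟫ := fun v => (real_inner_self_eq_norm_sq v).symm
  rw [h1 (a • x + b • y), h1 x, h1 y, h1 (x - y)]
  rw [inner_add_add_self, inner_sub_sub_self]
  simp only [real_inner_smul_left, real_inner_smul_right]
  have hb : b = 1 - a := by linarith
  subst hb
  rw [real_inner_comm y x]
  ring

lemma norm_comb_le (a b : ℝ) (ha : 0 ≤ a) (hb : 0 ≤ b) (X Y : H) :
    ‖a • X + b • Y‖ ≤ a * ‖X‖ + b * ‖Y‖ := by
  refine le_trans (norm_add_le _ _) ?_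
  rw [norm_smul, norm_smul, Real.norm_eq_abs, Real.norm_eq_abs,
    abs_of_nonneg ha, abs_of_nonneg hb]

lemma sq_dist_comb (a b : ℝ) (hab : a + b = 1) (m X Y : H) :
    ‖m - (a • X + b • Y)‖ ^ 2
      = a * ‖m - X‖ ^ 2 + b * ‖m - Y‖ ^ 2 - a * b * ‖Y - X‖ ^ 2 := by
  rw [comb_sub' a b hab, cvx_id a b hab]
  congr 2
  rw [show (m - X) - (m - Y) = Y - X by abel]

end helpers

lemma weak_subseq {H : Type*} [NormedAddCommGroup H] [InnerProductSpace ℝ H] [CompleteSpace H]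
    (y : ℕ → H) (B : ℝ) (hB : ∀ k, ‖y k‖ ≤ B) :
    ∃ q : H, ∃ φ : ℕ → ℕ, StrictMono φ ∧
      ∀ v : H, Tendsto (fun k => ⟪v, y (φ k)⟫) atTop (nhds ⟪v, q⟫) := by
  have hB0 : 0 ≤ B := le_trans (norm_nonneg (y 0)) (hB 0)
  -- sequential compactness in the product space
  have hcomp : IsCompact (Set.pi Set.univ (fun _ : ℕ => Set.Icc (-(B*B)) (B*B))) :=
    isCompact_univ_pi fun _ => isCompact_Icc
  have hmem : ∀ k : ℕ, (fun m => ⟪y m, y k⟫) ∈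
      (Set.pi Set.univ (fun _ : ℕ => Set.Icc (-(B*B)) (B*B))) := by
    intro k m _
    have h1 : |⟪y m, y k⟫| ≤ ‖y m‖ * ‖y k‖ := abs_real_inner_le_norm _ _
    have h2 : ‖y m‖ * ‖y k‖ ≤ B * B :=
      mul_le_mul (hB m) (hB k) (norm_nonneg _) hB0
    constructor
    · nlinarith [abs_nonneg ⟪y m, y k⟫, neg_abs_le ⟪y m, y k⟫]
    · nlinarith [le_abs_self ⟪y m, y k⟫]
  obtain ⟨l, -, φ, hφ, hconv⟩ := hcomp.isSeqCompact hmem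
  have hpt : ∀ m : ℕ, Tendsto (fun k => ⟪y m, y (φ k)⟫) atTop (nhds (l m)) := by
    intro m
    exact (tendsto_pi_nhds.mp hconv) m
  -- the set of v for which the inner products converge
  set P : H → Prop := fun v => ∃ c, Tendsto (fun k => ⟪v, y (φ k)⟫) atTop (nhds c) with hP
  have hPzero : P 0 := ⟨0, by simpa using tendsto_const_nhds⟩
  have hPadd : ∀ v w, P v → P w → P (v + w) := by
    rintro v w ⟨c, hc⟩ ⟨c', hc'⟩
    exact ⟨c + c', by simpa [inner_add_left] using hc.add hc'⟩
  have hPsmul : ∀ (r : ℝ) v, P v → P (r • v) := by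
    rintro r v ⟨c, hc⟩
    exact ⟨r * c, by simpa [real_inner_smul_left] using hc.const_mul r⟩
  set D : Submodule ℝ H :=
    { carrier := {v | P v}
      zero_mem' := hPzero
      add_mem' := fun hv hw => hPadd _ _ hv hw
      smul_mem' := fun r v hv => hPsmul r v hv } with hD
  have hDclosed : IsClosed (D : Set H) := by
    rw [← isSeqClosed_iff_isClosed]
    intro vs v hvs hv
    refine cauchySeq_tendsto_of_complete ?_ |>.imp fun c hc => hc
    rw [Metric.cauchySeq_iff]
    intro ε hε
    have hεB : 0 < ε / (4 * (B + 1)) := by positivity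
    -- pick vs j close to v
    obtain ⟨j, hj⟩ := (Metric.tendsto_atTop.mp hv) (ε / (4 * (B + 1))) hεB
    obtain ⟨c', hc'⟩ := hvs j
    have hcauchy := hc'.cauchySeq
    rw [Metric.cauchySeq_iff] at hcauchy
    obtain ⟨N, hN⟩ := hcauchy (ε / 2) (by positivity)
    refine ⟨N, fun m hm n hn => ?_⟩
    have hd := hj j le_rfl
    rw [dist_eq_norm] at hd
    have key : ∀ k : ℕ, |⟪v, y (φ k)⟫ - ⟪vs j, y (φ k)⟫| ≤ ε / 4 := by
      intro k
      have : ⟪v, y (φ k)⟫ - ⟪vs j, y (φ k)⟫ = ⟪v - vs j, y (φ k)⟫ := by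
        rw [inner_sub_left]
      rw [this]
      have h1 : |⟪v - vs j, y (φ k)⟫| ≤ ‖v - vs j‖ * ‖y (φ k)‖ := abs_real_inner_le_norm _ _
      have hd' : ‖v - vs j‖ < ε / (4 * (B + 1)) := by rwa [norm_sub_rev] at hd
      have h2 : ‖v - vs j‖ * ‖y (φ k)‖ ≤ (ε / (4 * (B + 1))) * B :=
        mul_le_mul (le_of_lt hd') (hB _) (norm_nonneg _) (le_of_lt hεB)
      have h3 : (ε / (4 * (B + 1))) * B ≤ ε / 4 := by
        rw [div_mul_eq_mul_div, div_le_div_iff₀ (by positivity) (by norm_num)]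
        nlinarith
      linarith
    have hmn := hN m hm n hn
    rw [Real.dist_eq] at hmn ⊢
    have km := key m
    have kn := key n
    have : ⟪v, y (φ m)⟫ - ⟪v, y (φ n)⟫ =
        (⟪v, y (φ m)⟫ - ⟪vs j, y (φ m)⟫) + (⟪vs j, y (φ m)⟫ - ⟪vs j, y (φ n)⟫)
        + (⟪vs j, y (φ n)⟫ - ⟪v, y (φ n)⟫) := by ring
    rw [this]
    calc |_| ≤ |⟪v, y (φ m)⟫ - ⟪vs j, y (φ m)⟫| + |⟪vs j, y (φ m)⟫ - ⟪vs j, y (φ n)⟫|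
        + |⟪vs j, y (φ n)⟫ - ⟪v, y (φ n)⟫| := by
          exact (abs_add_three _ _ _)
      _ < ε := by
          have : |⟪vs j, y (φ n)⟫ - ⟪v, y (φ n)⟫| = |⟪v, y (φ n)⟫ - ⟪vs j, y (φ n)⟫| := abs_sub_comm _ _
          rw [this]
          linarith
  -- D contains the closure of the span and its orthogonal complement
  set K : Submodule ℝ H := (Submodule.span ℝ (Set.range y)).topologicalClosure with hK
  have hyK : ∀ k, y k ∈ K :=
    fun k => (Submodule.span ℝ (Set.range y)).le_topologicalClosure
      (Submodule.subset_span (Set.mem_range_self k))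
  have hspanD : Submodule.span ℝ (Set.range y) ≤ D := by
    rw [Submodule.span_le]
    rintro w ⟨m, rfl⟩
    exact ⟨l m, hpt m⟩
  have hKD : K ≤ D := Submodule.topologicalClosure_minimal _ hspanD hDclosed
  have hKperpD : Kᗮ ≤ D := by
    intro v hv
    refine ⟨0, ?_⟩
    have h0 : ∀ k, ⟪v, y (φ k)⟫ = 0 := by
      intro k
      rw [real_inner_comm]
      exact hv (y (φ k)) (hyK (φ k))
    simpa [h0] using tendsto_const_nhds (α := ℝ) (f := atTop (α := ℕ))
  haveI : CompleteSpace K :=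
    (Submodule.span ℝ (Set.range y)).isClosed_topologicalClosure.completeSpace_coe
  have htop : K ⊔ Kᗮ = ⊤ := Submodule.sup_orthogonal_of_hasOrthogonalProjection
  have hall : ∀ v : H, P v := by
    intro v
    have hvtop : v ∈ K ⊔ Kᗮ := htop ▸ Submodule.mem_top
    exact sup_le hKD hKperpD hvtop
  -- build the limit functional
  choose L hL using hall
  have hLadd : ∀ v w, L (v + w) = L v + L w := by
    intro v w
    refine tendsto_nhds_unique (hL (v + w)) ?_
    simpa [inner_add_left] using (hL v).add (hL w)
  have hLsmul : ∀ (r : ℝ) v, L (r • v) = r * L v := by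
    intro r v
    refine tendsto_nhds_unique (hL (r • v)) ?_
    simpa [real_inner_smul_left] using (hL v).const_mul r
  have hLbound : ∀ v, |L v| ≤ B * ‖v‖ := by
    intro v
    have h1 : Tendsto (fun k => |⟪v, y (φ k)⟫|) atTop (nhds |L v|) := (hL v).abs
    refine le_of_tendsto h1 (Eventually.of_forall fun k => ?_)
    calc |⟪v, y (φ k)⟫| ≤ ‖v‖ * ‖y (φ k)‖ := abs_real_inner_le_norm _ _
      _ ≤ ‖v‖ * B := mul_le_mul_of_nonneg_left (hB _) (norm_nonneg _)
      _ = B * ‖v‖ := mul_comm _ _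
  set f : H →ₗ[ℝ] ℝ :=
    { toFun := L
      map_add' := hLadd
      map_smul' := hLsmul } with hf
  set fc : H →L[ℝ] ℝ := f.mkContinuous B (fun v => by rw [Real.norm_eq_abs]; exact hLbound v) with hfc
  refine ⟨(InnerProductSpace.toDual ℝ H).symm fc, φ, hφ, fun v => ?_⟩
  have hq : ⟪v, (InnerProductSpace.toDual ℝ H).symm fc⟫ = L v := by
    rw [real_inner_comm]
    rw [InnerProductSpace.toDual_symm_apply]
    rfl
  rw [hq]
  exact hL v


lemma xu_lemma (s c a : ℕ → ℝ) (hs : ∀ n, 0 ≤ s n)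
    (ha : ∀ n, 0 < a n) (ha1 : ∀ n, a n ≤ 1)
    (hdiv : Tendsto (fun N => ∑ n ∈ Finset.range N, a n) atTop atTop)
    (hrec : ∀ᶠ n in atTop, s (n + 1) ≤ (1 - a n) * s n + a n * c n)
    (hc : ∀ ε > 0, ∀ᶠ n in atTop, c n ≤ ε) :
    Tendsto s atTop (nhds 0) := by
  have key : ∀ ε > 0, ∀ᶠ n in atTop, s n < ε := by
    intro ε hε
    obtain ⟨N, hN⟩ := ((hc (ε/2) (by positivity)).and hrec).exists_forall_of_atTop
    -- product bound by induction
    set Pr : ℕ → ℝ := fun n => ∏ k ∈ Finset.Ico N n, (1 - a k) with hPr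
    have hPn : ∀ n, 0 ≤ Pr n := fun n =>
      Finset.prod_nonneg fun k _ => by linarith [ha1 k]
    have hind : ∀ n, N ≤ n → s n ≤ ε/2 + Pr n * s N := by
      intro n hn
      induction n, hn using Nat.le_induction with
      | base => simp [hPr, Finset.Ico_self]; linarith [hs N]
      | succ n hn ih =>
        have h1 := (hN n hn).2
        have h2 := (hN n hn).1
        have h3 : Pr (n+1) = Pr n * (1 - a n) := by
          rw [hPr]
          exact Finset.prod_Ico_succ_top hn _
        have h4 : (1 - a n) * s n ≤ (1 - a n) * (ε/2 + Pr n * s N) :=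
          mul_le_mul_of_nonneg_left ih (by linarith [ha1 n])
        have h5 : a n * c n ≤ a n * (ε/2) :=
          mul_le_mul_of_nonneg_left h2 (le_of_lt (ha n))
        rw [h3]
        nlinarith
    have hPexp : ∀ n, N ≤ n → Pr n ≤ Real.exp (-(∑ k ∈ Finset.range n, a k
        - ∑ k ∈ Finset.range N, a k)) := by
      intro n hn
      have h1 : Pr n ≤ ∏ k ∈ Finset.Ico N n, Real.exp (-(a k)) := by
        apply Finset.prod_le_prod (fun k _ => by linarith [ha1 k])
        intro k _
        linarith [Real.add_one_le_exp (-(a k))]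
      have h2 : ∏ k ∈ Finset.Ico N n, Real.exp (-(a k))
          = Real.exp (∑ k ∈ Finset.Ico N n, -(a k)) := (Real.exp_sum _ _).symm
      rw [h2] at h1
      rw [← Finset.sum_Ico_eq_sub _ hn]
      simpa [Finset.sum_neg_distrib] using h1
    -- the exponential term tends to zero
    have hexp0 : Tendsto (fun n => Real.exp (-(∑ k ∈ Finset.range n, a k
        - ∑ k ∈ Finset.range N, a k)) * s N) atTop (nhds 0) := by
      have h1 : Tendsto (fun n => ∑ k ∈ Finset.range n, a k
          - ∑ k ∈ Finset.range N, a k) atTop atTop :=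
        hdiv.atTop_add tendsto_const_nhds
      have h2 : Tendsto (fun n => Real.exp (-(∑ k ∈ Finset.range n, a k
          - ∑ k ∈ Finset.range N, a k))) atTop (nhds 0) :=
        Real.tendsto_exp_neg_atTop_nhds_zero.comp h1
      simpa using h2.mul_const (s N)
    have hev : ∀ᶠ n in atTop, Real.exp (-(∑ k ∈ Finset.range n, a k
        - ∑ k ∈ Finset.range N, a k)) * s N < ε/2 :=
      hexp0.eventually (gt_mem_nhds (by positivity))
    filter_upwards [hev, eventually_ge_atTop N] with n h1 h2
    have h3 := hind n h2
    have h4 := hPexp n h2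
    have h5 : Pr n * s N ≤ Real.exp (-(∑ k ∈ Finset.range n, a k
        - ∑ k ∈ Finset.range N, a k)) * s N := mul_le_mul_of_nonneg_right h4 (hs N)
    linarith
  rw [Metric.tendsto_atTop]
  intro ε hε
  obtain ⟨N, hN⟩ := (key ε hε).exists_forall_of_atTop
  refine ⟨N, fun n hn => ?_⟩
  rw [Real.dist_eq, sub_zero, abs_of_nonneg (hs n)]
  exact hN n hn

lemma tendsto_zero_of_ev (s : ℕ → ℝ) (h0 : ∀ n, 0 ≤ s n)
    (h : ∀ ε > 0, ∀ᶠ n in Filter.atTop, s n ≤ ε) :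
    Filter.Tendsto s Filter.atTop (nhds 0) := by
  rw [Metric.tendsto_atTop]
  intro ε hε
  obtain ⟨N, hN⟩ := (h (ε/2) (by positivity)).exists_forall_of_atTop
  refine ⟨N, fun n hn => ?_⟩
  rw [Real.dist_eq, sub_zero, abs_of_nonneg (h0 n)]
  linarith [hN n hn]

set_option maxHeartbeats 2000000 in
theorem stmt_18 {H : Type*} [NormedAddCommGroup H] [InnerProductSpace ℝ H] [CompleteSpace H]
    (C : Set H) (hC : C.Nonempty) (hCc : IsClosed C) (hCv : Convex ℝ C)
    (T S : H → H) (hT : Set.MapsTo T C C) (hS : Set.MapsTo S C C)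
    (hne : ∀ x ∈ C, ∀ y ∈ C, ‖T x - T y‖ ≤ ‖x - y‖)
    (hns : ∀ x ∈ C, ∀ y ∈ C, 2 * ‖S x - S y‖ ^ 2 ≤ ‖S x - y‖ ^ 2 + ‖x - S y‖ ^ 2)
    (hFix : ∃ z ∈ C, T z = z ∧ S z = z)
    (δ : ℝ) (hδ : δ ∈ Set.Ioo (0 : ℝ) 1)
    (AT AS : H → H)
    (hAT : ∀ x, AT x = (1 - δ) • x + δ • T x)
    (hAS : ∀ x, AS x = (1 - δ) • x + δ • S x)
    (u : H) (hu : u ∈ C)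
    (α β : ℕ → ℝ) (hα : ∀ n, α n ∈ Set.Ioo (0 : ℝ) 1) (hβ : ∀ n, β n ∈ Set.Icc (0 : ℝ) 1)
    (hα0 : Filter.Tendsto α Filter.atTop (nhds 0))
    (hαdiv : Filter.Tendsto (fun N => ∑ n ∈ Finset.range N, α n) Filter.atTop Filter.atTop)
    (hβsum : Summable β)
    (x : ℕ → H) (hx1 : x 1 ∈ C)
    (hrec : ∀ n ≥ 1, x (n + 1) =
      α n • u + (1 - α n) • (β n • AT (x n) + (1 - β n) • AS (x n))) :
    ∃ p, p ∈ C ∧ S p = p ∧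
      (∀ y ∈ C, S y = y → ‖u - p‖ ≤ ‖u - y‖) ∧
      Filter.Tendsto x Filter.atTop (nhds p) := by
  obtain ⟨hδ0, hδ1⟩ := hδ
  obtain ⟨z₀, hz₀C, hTz₀, hSz₀⟩ := hFix
  set F : Set H := {y | y ∈ C ∧ S y = y} with hF
  have hz₀F : z₀ ∈ F := ⟨hz₀C, hSz₀⟩
  -- quasi-nonexpansiveness of S w.r.t. fixed points
  have hqS : ∀ xx ∈ C, ∀ q ∈ F, ‖S xx - q‖ ≤ ‖xx - q‖ := by
    intro xx hxx q hq
    have h := hns xx hxx q hq.1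
    rw [hq.2] at h
    nlinarith [norm_nonneg (S xx - q), norm_nonneg (xx - q)]
  have hFclosed : IsClosed F := by
    refine IsSeqClosed.isClosed ?_
    intro ys yy hys hy
    have hyC : yy ∈ C := hCc.mem_of_tendsto hy (Eventually.of_forall fun n => (hys n).1)
    refine ⟨hyC, ?_⟩
    have h1 : ∀ n, ‖S yy - ys n‖ ≤ ‖yy - ys n‖ := fun n => hqS yy hyC (ys n) (hys n)
    have h2 : Tendsto (fun n => ‖yy - ys n‖) atTop (nhds 0) := by
      have := tendsto_iff_norm_sub_tendsto_zero.mp hy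
      simpa [norm_sub_rev] using this
    have h3 : Tendsto (fun n => ‖S yy - ys n‖) atTop (nhds 0) :=
      squeeze_zero (fun n => norm_nonneg _) h1 h2
    have h4 : Tendsto ys atTop (nhds (S yy)) := by
      rw [tendsto_iff_norm_sub_tendsto_zero]
      simpa [norm_sub_rev] using h3
    exact (tendsto_nhds_unique h4 hy)
  have hFconvex : Convex ℝ F := by
    intro x₁ hx₁ x₂ hx₂ a b ha hb hab
    have hwC : a • x₁ + b • x₂ ∈ C := hCv hx₁.1 hx₂.1 ha hb hab
    refine ⟨hwC, ?_⟩
    set w : H := a • x₁ + b • x₂ with hw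
    have e1 := sq_dist_comb a b hab (S w) x₁ x₂
    have e2 := sq_dist_comb a b hab w x₁ x₂
    have hq1 : ‖S w - x₁‖ ≤ ‖w - x₁‖ := hqS w hwC x₁ hx₁
    have hq2 : ‖S w - x₂‖ ≤ ‖w - x₂‖ := hqS w hwC x₂ hx₂
    have hq1' : ‖S w - x₁‖ ^ 2 ≤ ‖w - x₁‖ ^ 2 :=
      pow_le_pow_left₀ (norm_nonneg _) hq1 2
    have hq2' : ‖S w - x₂‖ ^ 2 ≤ ‖w - x₂‖ ^ 2 :=
      pow_le_pow_left₀ (norm_nonneg _) hq2 2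
    have e2' : ‖w - w‖ ^ 2 = 0 := by simp
    rw [← hw] at e1 e2
    have hfin : ‖S w - w‖ ^ 2 ≤ 0 := by
      have : ‖S w - w‖ ^ 2 = a * ‖S w - x₁‖ ^ 2 + b * ‖S w - x₂‖ ^ 2
          - a * b * ‖x₂ - x₁‖ ^ 2 := e1
      nlinarith [mul_le_mul_of_nonneg_left hq1' ha, mul_le_mul_of_nonneg_left hq2' hb]
    have : ‖S w - w‖ = 0 := by nlinarith [norm_nonneg (S w - w)]
    have := norm_eq_zero.mp this
    rw [sub_eq_zero] at this
    exact this
  -- the projection point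
  obtain ⟨p, hpF, hpmin⟩ := exists_norm_eq_iInf_of_complete_convex ⟨z₀, hz₀F⟩
    hFclosed.isComplete hFconvex u
  have hpchar : ∀ w ∈ F, ⟪u - p, w - p⟫ ≤ 0 :=
    (norm_eq_iInf_iff_real_inner_le_zero hFconvex hpF).mp hpmin
  have hpdist : ∀ y ∈ F, ‖u - p‖ ≤ ‖u - y‖ := by
    intro y hy
    rw [hpmin]
    exact ciInf_le ⟨0, fun r ⟨w, hw⟩ => hw ▸ norm_nonneg _⟩ (⟨y, hy⟩ : F)
  have hpC : p ∈ C := hpF.1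
  -- membership of the iterates
  have hxC : ∀ n, 1 ≤ n → x n ∈ C := by
    intro n hn
    induction n, hn using Nat.le_induction with
    | base => exact hx1
    | succ n hn ih =>
      rw [hrec n hn]
      have hATC : AT (x n) ∈ C := by
        rw [hAT]
        exact hCv ih (hT ih) (by linarith) (le_of_lt hδ0) (by ring)
      have hASC : AS (x n) ∈ C := by
        rw [hAS]
        exact hCv ih (hS ih) (by linarith) (le_of_lt hδ0) (by ring)
      have hwC : β n • AT (x n) + (1 - β n) • AS (x n) ∈ C :=
        hCv hATC hASC (hβ n).1 (by linarith [(hβ n).2]) (by ring)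
      exact hCv hu hwC (le_of_lt (hα n).1) (by linarith [(hα n).2]) (by ring)
  -- quasi-type inequalities for the averaged maps
  have hATz : ∀ xx ∈ C, ‖AT xx - z₀‖ ≤ ‖xx - z₀‖ := by
    intro xx hxx
    rw [hAT, comb_sub (1-δ) δ (by ring)]
    have h1 := norm_comb_le (1-δ) δ (by linarith) (le_of_lt hδ0) (xx - z₀) (T xx - z₀)
    have h2 : ‖T xx - z₀‖ ≤ ‖xx - z₀‖ := by
      have := hne xx hxx z₀ hz₀C
      rwa [hTz₀] at this
    nlinarith
  have hASkey : ∀ xx ∈ C, ∀ q ∈ F,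
      ‖AS xx - q‖^2 ≤ ‖xx - q‖^2 - δ*(1-δ)*‖xx - S xx‖^2 := by
    intro xx hxx q hq
    rw [hAS, comb_sub (1-δ) δ (by ring)]
    rw [cvx_id (1-δ) δ (by ring)]
    have h1 : (xx - q) - (S xx - q) = xx - S xx := by abel
    rw [h1]
    have h2 : ‖S xx - q‖ ≤ ‖xx - q‖ := hqS xx hxx q hq
    have h2' : ‖S xx - q‖^2 ≤ ‖xx - q‖^2 := pow_le_pow_left₀ (norm_nonneg _) h2 2
    nlinarith
  have hASz : ∀ xx ∈ C, ∀ q ∈ F, ‖AS xx - q‖ ≤ ‖xx - q‖ := by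
    intro xx hxx q hq
    have h := hASkey xx hxx q hq
    nlinarith [norm_nonneg (AS xx - q), norm_nonneg (xx - q), norm_nonneg (xx - S xx),
      mul_nonneg (mul_nonneg (le_of_lt hδ0) (by linarith : (0:ℝ) ≤ 1 - δ))
        (sq_nonneg ‖xx - S xx‖)]
  -- boundedness
  set R : ℝ := max ‖x 1 - z₀‖ ‖u - z₀‖ with hR
  have hxz : ∀ n, 1 ≤ n → ‖x n - z₀‖ ≤ R := by
    intro n hn
    induction n, hn using Nat.le_induction with
    | base => exact le_max_left _ _
    | succ n hn ih =>
      rw [hrec n hn]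
      have hwz : ‖(β n • AT (x n) + (1 - β n) • AS (x n)) - z₀‖ ≤ R := by
        rw [comb_sub (β n) (1 - β n) (by ring)]
        have h1 : ‖AT (x n) - z₀‖ ≤ R := le_trans (hATz _ (hxC n hn)) ih
        have h2 : ‖AS (x n) - z₀‖ ≤ R := le_trans (hASz _ (hxC n hn) z₀ hz₀F) ih
        have h3 := norm_comb_le (β n) (1 - β n) (hβ n).1 (by linarith [(hβ n).2])
          (AT (x n) - z₀) (AS (x n) - z₀)
        nlinarith [(hβ n).1, (hβ n).2]
      rw [comb_sub (α n) (1 - α n) (by ring)]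
      have h4 : ‖u - z₀‖ ≤ R := le_max_right _ _
      have h5 := norm_comb_le (α n) (1 - α n) (le_of_lt (hα n).1)
        (by linarith [(hα n).2]) (u - z₀) ((β n • AT (x n) + (1 - β n) • AS (x n)) - z₀)
      nlinarith [(hα n).1, (hα n).2]
  have hR0 : 0 ≤ R := le_trans (norm_nonneg _) (le_max_left _ _)
  set B1 : ℝ := R + ‖z₀ - p‖ with hB1def
  have htri : ∀ a b c : H, ‖a - c‖ ≤ ‖a - b‖ + ‖b - c‖ := by
    intro a b c
    rw [show a - c = (a - b) + (b - c) by abel]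
    exact norm_add_le _ _
  have hxp : ∀ n, 1 ≤ n → ‖x n - p‖ ≤ B1 := fun n hn =>
    le_trans (htri _ z₀ _) (by linarith [hxz n hn])
  have hATp : ∀ n, 1 ≤ n → ‖AT (x n) - p‖ ≤ B1 := fun n hn =>
    le_trans (htri _ z₀ _) (by linarith [hATz (x n) (hxC n hn), hxz n hn])
  set B0 : ℝ := R + ‖z₀‖ with hB0def
  have hxnorm : ∀ n, 1 ≤ n → ‖x n‖ ≤ B0 := by
    intro n hn
    rw [show x n = (x n - z₀) + z₀ by abel]
    exact le_trans (norm_add_le _ _) (by linarith [hxz n hn])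
  set ss : ℕ → ℝ := fun n => ‖x n - p‖^2 with hssdef
  set tt : ℕ → ℝ := fun n => ‖x n - S (x n)‖ with httdef
  have hss0 : ∀ n, 0 ≤ ss n := fun n => sq_nonneg _
  have htt0 : ∀ n, 0 ≤ tt n := fun n => norm_nonneg _
  set K : ℝ := B1^2 with hKdef
  have hB10 : 0 ≤ B1 := le_trans (norm_nonneg (x 1 - p)) (hxp 1 le_rfl)
  have hK0 : 0 ≤ K := sq_nonneg _
  set d : ℕ → ℝ := fun n => β n * K with hddef
  have hd0 : ∀ n, 0 ≤ d n := fun n => mul_nonneg (hβ n).1 hK0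
  have hdsum : Summable d := hβsum.mul_right K
  set r : ℕ → ℝ := fun n => ∑' k, d (k + n) with hrdef
  have hshift : ∀ n, Summable (fun k => d (k + n)) := fun n =>
    (summable_nat_add_iff n).mpr hdsum
  have hr0 : ∀ n, 0 ≤ r n := fun n => tsum_nonneg (fun k => hd0 _)
  have hrrec : ∀ n, r n = d n + r (n + 1) := by
    intro n
    rw [hrdef]
    simp only
    rw [Summable.tsum_eq_zero_add (hshift n)]
    congr 1
    · simp
    · apply tsum_congr
      intro k
      congr 1
      omega
  have hrtend : Tendsto r atTop (nhds 0) := by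
    rw [hrdef]
    exact tendsto_sum_nat_add d
  set Bu : ℝ := ‖u - p‖^2 with hBudef
  set c₀ : ℝ := δ * (1 - δ) with hc₀def
  have hc₀0 : 0 < c₀ := mul_pos hδ0 (by linarith)
  set wseq : ℕ → H := fun n => β n • AT (x n) + (1 - β n) • AS (x n) with hwseqdef
  have hxrec' : ∀ n, 1 ≤ n → x (n+1) - p = α n • (u - p) + (1 - α n) • (wseq n - p) := by
    intro n hn
    rw [hrec n hn, comb_sub (α n) (1 - α n) (by ring)]
  have hwkey : ∀ n, 1 ≤ n →
      ‖wseq n - p‖^2 ≤ ss n + d n - (1 - β n) * c₀ * (tt n)^2 := by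
    intro n hn
    have h0 : wseq n - p = β n • (AT (x n) - p) + (1 - β n) • (AS (x n) - p) :=
      comb_sub (β n) (1 - β n) (by ring) _ _ _
    rw [h0, cvx_id (β n) (1 - β n) (by ring)]
    have h1 : ‖AT (x n) - p‖^2 ≤ K :=
      pow_le_pow_left₀ (norm_nonneg _) (hATp n hn) 2
    have h2 : ‖AS (x n) - p‖^2 ≤ ss n - c₀ * (tt n)^2 := hASkey (x n) (hxC n hn) p hpF
    have h3 : (0:ℝ) ≤ β n * (1 - β n) * ‖(AT (x n) - p) - (AS (x n) - p)‖^2 :=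
      mul_nonneg (mul_nonneg (hβ n).1 (by linarith [(hβ n).2])) (sq_nonneg _)
    have h4 : (0:ℝ) ≤ c₀ * (tt n)^2 := mul_nonneg (le_of_lt hc₀0) (sq_nonneg _)
    have hβ1 := (hβ n).1
    have hβ2 := (hβ n).2
    have hssn := hss0 n
    have hssne : ss n = ‖x n - p‖^2 := rfl
    have hdne : d n = β n * K := rfl
    have htne : tt n = ‖x n - S (x n)‖ := rfl
    nlinarith [mul_le_mul_of_nonneg_left h1 hβ1,
      mul_le_mul_of_nonneg_left h2 (by linarith : (0:ℝ) ≤ 1 - β n)]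
  set qq : ℕ → ℝ := fun n => (1 - α n) * ((1 - β n) * (c₀ * (tt n)^2)) with hqqdef
  have hqq0 : ∀ n, 0 ≤ qq n := fun n =>
    mul_nonneg (by linarith [(hα n).2]) (mul_nonneg (by linarith [(hβ n).2])
      (mul_nonneg (le_of_lt hc₀0) (sq_nonneg _)))
  have hI1 : ∀ n, 1 ≤ n →
      ss (n+1) + r (n+1) ≤ ss n + r n + α n * Bu - qq n := by
    intro n hn
    have h0 : ss (n+1) = ‖α n • (u - p) + (1 - α n) • (wseq n - p)‖^2 := by
      rw [hssdef]; simp only; rw [hxrec' n hn]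
    rw [h0, cvx_id (α n) (1 - α n) (by ring)]
    have h1 := hwkey n hn
    have h2 : (0:ℝ) ≤ α n * (1 - α n) * ‖(u - p) - (wseq n - p)‖^2 :=
      mul_nonneg (mul_nonneg (le_of_lt (hα n).1) (by linarith [(hα n).2])) (sq_nonneg _)
    have h3 := hrrec n
    have hα1 := (hα n).1
    have hα2 := (hα n).2
    have hβ1 := (hβ n).1
    have hβ2 := (hβ n).2
    have h4 : (0:ℝ) ≤ c₀ * (tt n)^2 := mul_nonneg (le_of_lt hc₀0) (sq_nonneg _)
    have hssn := hss0 n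
    have hdn := hd0 n
    have hqqn : qq n = (1 - α n) * ((1 - β n) * (c₀ * (tt n)^2)) := rfl
    have hssne : ss n = ‖x n - p‖^2 := rfl
    have hdne : d n = β n * K := rfl
    nlinarith [mul_le_mul_of_nonneg_left h1 (by linarith : (0:ℝ) ≤ 1 - α n)]
  set cc : ℕ → ℝ := fun n => 2 * ⟪u - p, x (n+1) - p⟫ with hccdef
  have hI2 : ∀ n, 1 ≤ n →
      ss (n+1) + r (n+1) ≤ (1 - α n) * (ss n + r n) + α n * (cc n + r n) := by
    intro n hn
    have hA : ss (n+1) = ‖α n • (u - p) + (1 - α n) • (wseq n - p)‖^2 := by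
      rw [hssdef]; simp only; rw [hxrec' n hn]
    have hexp : ‖α n • (u - p) + (1 - α n) • (wseq n - p)‖^2
        = ‖α n • (u - p)‖^2 + 2 * ⟪α n • (u - p), (1 - α n) • (wseq n - p)⟫
          + ‖(1 - α n) • (wseq n - p)‖^2 := by
      rw [@norm_add_sq_real]
    have hip : ⟪α n • (u - p), x (n+1) - p⟫
        = ‖α n • (u - p)‖^2 + ⟪α n • (u - p), (1 - α n) • (wseq n - p)⟫ := by
      rw [hxrec' n hn, inner_add_right, real_inner_self_eq_norm_sq]
    have hipl : ⟪α n • (u - p), x (n+1) - p⟫ = α n * ⟪u - p, x (n+1) - p⟫ :=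
      real_inner_smul_left _ _ _
    have hBsq : ‖(1 - α n) • (wseq n - p)‖^2 = (1 - α n)^2 * ‖wseq n - p‖^2 := by
      rw [norm_smul, Real.norm_eq_abs, abs_of_nonneg (by linarith [(hα n).2]), mul_pow]
    have hw2 : ‖wseq n - p‖^2 ≤ ss n + d n := by
      have h1 := hwkey n hn
      have h4 : (0:ℝ) ≤ (1 - β n) * (c₀ * (tt n)^2) :=
        mul_nonneg (by linarith [(hβ n).2]) (mul_nonneg (le_of_lt hc₀0) (sq_nonneg _))
      nlinarith
    have h3 := hrrec n
    have hα1 := (hα n).1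
    have hα2 := (hα n).2
    have hssn := hss0 n
    have hdn := hd0 n
    have hrn := hr0 n
    have hccn : cc n = 2 * ⟪u - p, x (n+1) - p⟫ := rfl
    have step1 : ss (n+1) ≤ (1 - α n)^2 * (ss n + d n) + α n * cc n := by
      have hBle : ‖(1 - α n) • (wseq n - p)‖^2 ≤ (1 - α n)^2 * (ss n + d n) := by
        rw [hBsq]
        exact mul_le_mul_of_nonneg_left hw2 (sq_nonneg _)
      rw [hA, hexp, hccn]
      linarith [hip, hipl, hBle, sq_nonneg ‖α n • (u - p)‖]
    have step2 : (1 - α n)^2 * (ss n + d n) ≤ (1 - α n) * (ss n + d n) := by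
      apply mul_le_mul_of_nonneg_right _ (by linarith)
      nlinarith
    linarith [mul_nonneg (le_of_lt hα1) hdn]
  -- weak-cluster / demiclosedness argument
  have hW : ∀ (y : ℕ → H), (∀ k, y k ∈ C) → (∀ k, ‖y k‖ ≤ B0) →
      Tendsto (fun k => ‖y k - S (y k)‖) atTop (nhds 0) →
      ∀ ε > 0, ∀ᶠ k in atTop, ⟪u - p, y k - p⟫ ≤ ε := by
    intro y hyC hyB hyS ε hε
    by_contra hcon
    rw [Filter.not_eventually] at hcon
    have hcon' : ∃ᶠ k in atTop, ε < ⟪u - p, y k - p⟫ :=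
      hcon.mono (fun k hk => lt_of_not_ge hk)
    obtain ⟨ψ, hψmono, hψ⟩ := Filter.extraction_of_frequently_atTop hcon'
    obtain ⟨q, φ', hφ'mono, hweak⟩ := weak_subseq (fun j => y (ψ j)) B0 (fun j => hyB _)
    set Y : ℕ → H := fun k => y (ψ (φ' k)) with hYdef
    have hYC : ∀ k, Y k ∈ C := fun k => hyC _
    have hYS : Tendsto (fun k => ‖Y k - S (Y k)‖) atTop (nhds 0) :=
      hyS.comp ((hψmono.comp hφ'mono).tendsto_atTop)
    have hweak' : ∀ v : H, Tendsto (fun k => ⟪v, Y k⟫) atTop (nhds ⟪v, q⟫) := hweak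
    have hqC : q ∈ C := by
      by_contra hqC
      obtain ⟨f, uu, hfb, hfq⟩ := geometric_hahn_banach_closed_point hCv hCc hqC
      set v : H := (InnerProductSpace.toDual ℝ H).symm f with hv
      have hfv : ∀ w : H, ⟪v, w⟫ = f w := fun w => by
        rw [hv]; exact InnerProductSpace.toDual_symm_apply
      have h1 : Tendsto (fun k => ⟪v, Y k⟫) atTop (nhds ⟪v, q⟫) := hweak' v
      have h2 : ∀ k, ⟪v, Y k⟫ ≤ uu := fun k => le_of_lt (by rw [hfv]; exact hfb _ (hYC k))
      have h3 : ⟪v, q⟫ ≤ uu := le_of_tendsto h1 (Eventually.of_forall h2)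
      rw [hfv] at h3
      linarith
    have hSq : S q = q := by
      set e : ℕ → ℝ := fun k => ‖Y k - S (Y k)‖ with hedef
      have he0 : ∀ k, 0 ≤ e k := fun k => norm_nonneg _
      set g : ℝ := ‖q - S q‖ with hgdef
      have hg0 : 0 ≤ g := norm_nonneg _
      set Bq : ℝ := B0 + ‖q‖ with hBqdef
      have hbb : ∀ k, ‖Y k - q‖ ≤ Bq := fun k =>
        le_trans (norm_sub_le _ _) (by linarith [hyB (ψ (φ' k))])
      have hkey : ∀ k, g^2 + 2*⟪Y k - q, q - S q⟫
          ≤ 2*Bq*(e k) + 3*(e k)^2 + 4*((Bq + e k + g)*(e k)) := by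
        intro k
        have h1 := hns (Y k) (hYC k) q hqC
        have ha : ‖Y k - S q‖ ≤ e k + ‖S (Y k) - S q‖ := by
          have : Y k - S q = (Y k - S (Y k)) + (S (Y k) - S q) := by abel
          rw [this]
          exact norm_add_le _ _
        have hb' : ‖S (Y k) - q‖ ≤ ‖Y k - q‖ + e k := by
          have : S (Y k) - q = (Y k - q) + (S (Y k) - Y k) := by abel
          rw [this]
          refine le_trans (norm_add_le _ _) ?_
          rw [norm_sub_rev (S (Y k)) (Y k)]
        have hid : ‖Y k - S q‖^2 = ‖Y k - q‖^2 + 2*⟪Y k - q, q - S q⟫ + g^2 := by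
          have h : Y k - S q = (Y k - q) + (q - S q) := by abel
          rw [h, @norm_add_sq_real]
        have hs'b : ‖S (Y k) - S q‖ ≤ ‖Y k - q‖ + e k + g := by
          have h : S (Y k) - S q = (S (Y k) - q) + (q - S q) := by abel
          rw [h]
          refine le_trans (norm_add_le _ _) ?_
          linarith [hb']
        have hasq : ‖Y k - S q‖^2 ≤ (e k + ‖S (Y k) - S q‖)^2 :=
          pow_le_pow_left₀ (norm_nonneg _) ha 2
        have hs''sq : ‖S (Y k) - q‖^2 ≤ (‖Y k - q‖ + e k)^2 :=
          pow_le_pow_left₀ (norm_nonneg _) hb' 2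
        have hes' : e k * ‖S (Y k) - S q‖ ≤ e k * (Bq + e k + g) := by
          apply mul_le_mul_of_nonneg_left _ (he0 k)
          linarith [hs'b, hbb k]
        have hbe : ‖Y k - q‖ * e k ≤ Bq * e k :=
          mul_le_mul_of_nonneg_right (hbb k) (he0 k)
        nlinarith [norm_nonneg (S (Y k) - S q), norm_nonneg (Y k - q), he0 k]
      have hrhs : Tendsto (fun k => 2*Bq*(e k) + 3*(e k)^2 + 4*((Bq + e k + g)*(e k)))
          atTop (nhds 0) := by
        have hcont : Continuous fun s : ℝ => 2*Bq*s + 3*s^2 + 4*((Bq + s + g)*s) := by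
          fun_prop
        have h := (hcont.tendsto 0).comp hYS
        simpa [Function.comp_def] using h
      have hipt : Tendsto (fun k => ⟪Y k - q, q - S q⟫) atTop (nhds 0) := by
        have h1 : ∀ k, ⟪Y k - q, q - S q⟫ = ⟪q - S q, Y k⟫ - ⟪q - S q, q⟫ := by
          intro k
          rw [real_inner_comm, inner_sub_right]
        simp_rw [h1]
        have h2 := (hweak' (q - S q)).sub (tendsto_const_nhds (x := ⟪q - S q, q⟫))
        simpa using h2
      have hfinal : g^2 ≤ 0 := by
        have hl : Tendsto (fun k => g^2 + 2*⟪Y k - q, q - S q⟫) atTop (nhds (g^2)) := by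
          have := (tendsto_const_nhds (x := g^2)).add (hipt.const_mul 2)
          simpa [mul_comm] using this
        exact le_of_tendsto_of_tendsto' hl hrhs hkey
      have hgz : g = 0 := by nlinarith
      rw [hgdef] at hgz
      have := norm_eq_zero.mp hgz
      rw [sub_eq_zero] at this
      exact this.symm
    have hqF : q ∈ F := ⟨hqC, hSq⟩
    have h4 : Tendsto (fun k => ⟪u - p, Y k - p⟫) atTop (nhds ⟪u - p, q - p⟫) := by
      have h1 : ∀ k : ℕ, ⟪u - p, Y k - p⟫ = ⟪u - p, Y k⟫ - ⟪u - p, p⟫ := fun k =>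
        inner_sub_right _ _ _
      simp_rw [h1]
      have h2 := (hweak' (u - p)).sub (tendsto_const_nhds (x := ⟪u - p, p⟫))
      have h3 : ⟪u - p, q - p⟫ = ⟪u - p, q⟫ - ⟪u - p, p⟫ := inner_sub_right _ _ _
      rw [h3]
      exact h2
    have h5 : ε ≤ ⟪u - p, q - p⟫ :=
      ge_of_tendsto h4 (Eventually.of_forall fun k => le_of_lt (hψ (φ' k)))
    have h6 := hpchar q hqF
    linarith
  -- setup for the final convergence argument
  have hβ0 : Tendsto β atTop (nhds 0) := hβsum.tendsto_atTop_zero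
  set s' : ℕ → ℝ := fun n => ss n + r n with hs'def
  have hs'0 : ∀ n, 0 ≤ s' n := fun n => add_nonneg (hss0 n) (hr0 n)
  have hs'n : ∀ n, s' n = ss n + r n := fun n => rfl
  have hfinish : Tendsto s' atTop (nhds 0) → Tendsto x atTop (nhds p) := by
    intro h
    have h1 : Tendsto ss atTop (nhds 0) :=
      squeeze_zero hss0 (fun n => le_add_of_nonneg_right (hr0 n)) h
    have h2 : Tendsto (fun n => ‖x n - p‖) atTop (nhds 0) := by
      have h3 := (Real.continuous_sqrt.tendsto 0).comp h1
      have h4 : ∀ n, Real.sqrt (ss n) = ‖x n - p‖ := fun n => Real.sqrt_sq (norm_nonneg _)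
      simpa [Function.comp_def, h4] using h3
    rw [tendsto_iff_norm_sub_tendsto_zero]
    exact h2
  -- small thresholds
  have hαsmall : ∀ᶠ n in atTop, α n < 1/2 := hα0.eventually (gt_mem_nhds (by norm_num))
  have hβsmall : ∀ᶠ n in atTop, β n < 1/2 := hβ0.eventually (gt_mem_nhds (by norm_num))
  have httsq : ∀ n, α n ≤ 1/2 → β n ≤ 1/2 → c₀ * (tt n)^2 ≤ 4 * qq n := by
    intro n h1 h2
    have hqqn : qq n = (1 - α n) * ((1 - β n) * (c₀ * (tt n)^2)) := rfl
    have hX : 0 ≤ c₀ * (tt n)^2 := mul_nonneg (le_of_lt hc₀0) (sq_nonneg _)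
    have hab : 1/4 ≤ (1 - α n) * (1 - β n) := by nlinarith [(hα n).1, (hβ n).1]
    nlinarith [mul_le_mul_of_nonneg_right hab hX]
  have httof : ∀ (σ : ℕ → ℕ), (∀ m, α (σ m) ≤ 1/2) → (∀ m, β (σ m) ≤ 1/2) →
      Tendsto (fun m => qq (σ m)) atTop (nhds 0) →
      Tendsto (fun m => tt (σ m)) atTop (nhds 0) := by
    intro σ h1 h2 h3
    have h4 : Tendsto (fun m => c₀ * (tt (σ m))^2) atTop (nhds 0) := by
      apply squeeze_zero (fun m => mul_nonneg (le_of_lt hc₀0) (sq_nonneg _))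
        (fun m => httsq (σ m) (h1 m) (h2 m))
      simpa using h3.const_mul 4
    have h5 : Tendsto (fun m => (tt (σ m))^2) atTop (nhds 0) := by
      have := h4.const_mul (1/c₀)
      have hne : c₀ ≠ 0 := ne_of_gt hc₀0
      simp only [← mul_assoc, one_div, inv_mul_cancel₀ hne, one_mul, mul_zero] at this
      exact this
    have h6 := (Real.continuous_sqrt.tendsto 0).comp h5
    have h7 : ∀ m, Real.sqrt ((tt (σ m))^2) = tt (σ m) := fun m => Real.sqrt_sq (htt0 _)
    simpa [Function.comp_def, h7] using h6
  -- difference of consecutive iterates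
  have hdiffb : ∀ n, 1 ≤ n →
      ‖x (n+1) - x n‖ ≤ α n * (‖u‖ + B0) + β n * (2*R) + tt n := by
    intro n hn
    have h0 : x (n+1) - x n = α n • (u - x n) + (1 - α n) • (wseq n - x n) := by
      rw [hrec n hn]
      exact comb_sub (α n) (1 - α n) (by ring) _ _ _
    have h1 : ‖u - x n‖ ≤ ‖u‖ + B0 :=
      le_trans (norm_sub_le _ _) (by linarith [hxnorm n hn])
    have hAT1 : ‖AT (x n) - x n‖ ≤ 2*R := by
      have e : AT (x n) - x n = δ • (T (x n) - x n) := by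
        rw [hAT, smul_sub, sub_smul, one_smul]
        abel
      rw [e, norm_smul, Real.norm_eq_abs, abs_of_nonneg (le_of_lt hδ0)]
      have h2 : ‖T (x n) - x n‖ ≤ 2*R := by
        refine le_trans (htri _ z₀ _) ?_
        have h3 := hne (x n) (hxC n hn) z₀ hz₀C
        rw [hTz₀] at h3
        have h4 := hxz n hn
        rw [norm_sub_rev z₀ (x n)]
        linarith
      nlinarith [norm_nonneg (T (x n) - x n)]
    have hAS1 : ‖AS (x n) - x n‖ ≤ tt n := by
      have e : AS (x n) - x n = δ • (S (x n) - x n) := by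
        rw [hAS, smul_sub, sub_smul, one_smul]
        abel
      rw [e, norm_smul, Real.norm_eq_abs, abs_of_nonneg (le_of_lt hδ0)]
      have h2 : tt n = ‖x n - S (x n)‖ := rfl
      rw [h2, norm_sub_rev]
      nlinarith [norm_nonneg (x n - S (x n))]
    have hw1 : ‖wseq n - x n‖ ≤ β n * (2*R) + tt n := by
      have e : wseq n - x n = β n • (AT (x n) - x n) + (1 - β n) • (AS (x n) - x n) :=
        comb_sub (β n) (1 - β n) (by ring) _ _ _
      rw [e]
      have h3 := norm_comb_le (β n) (1 - β n) (hβ n).1 (by linarith [(hβ n).2])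
        (AT (x n) - x n) (AS (x n) - x n)
      nlinarith [(hβ n).1, (hβ n).2, htt0 n, mul_le_mul_of_nonneg_left hAT1 (hβ n).1,
        mul_le_mul_of_nonneg_left hAS1 (by linarith [(hβ n).2] : (0:ℝ) ≤ 1 - β n)]
    rw [h0]
    have h5 := norm_comb_le (α n) (1 - α n) (le_of_lt (hα n).1)
      (by linarith [(hα n).2]) (u - x n) (wseq n - x n)
    nlinarith [(hα n).1, (hα n).2, mul_le_mul_of_nonneg_left h1 (le_of_lt (hα n).1),
      mul_le_mul_of_nonneg_left hw1 (by linarith [(hα n).2] : (0:ℝ) ≤ 1 - α n),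
      htt0 n, norm_nonneg (wseq n - x n)]
  -- main dichotomy
  have hs'tend : Tendsto s' atTop (nhds 0) := by
    by_cases hcase : ∃ N, ∀ n ≥ N, s' (n+1) ≤ s' n
    · -- Case 1 : s' is eventually nonincreasing
      obtain ⟨N, hN⟩ := hcase
      have hanti : Antitone (fun n => s' (n + N)) := by
        apply antitone_nat_of_succ_le
        intro n
        have h := hN (n + N) (Nat.le_add_left _ _)
        rwa [show n + N + 1 = n + 1 + N by omega] at h
      have hbdd : BddBelow (Set.range fun n => s' (n + N)) :=
        ⟨0, fun z ⟨n, hn⟩ => hn ▸ hs'0 _⟩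
      have hconv := tendsto_atTop_ciInf hanti hbdd
      have hs'conv : Tendsto s' atTop (nhds (⨅ n, s' (n + N))) :=
        (tendsto_add_atTop_iff_nat N).mp hconv
      have hs'succ : Tendsto (fun n => s' (n+1)) atTop (nhds (⨅ n, s' (n + N))) :=
        (tendsto_add_atTop_iff_nat 1).mpr hs'conv
      have hdiff0 : Tendsto (fun n => s' n - s' (n+1)) atTop (nhds 0) := by
        simpa using hs'conv.sub hs'succ
      have hqqt : Tendsto qq atTop (nhds 0) := by
        apply squeeze_zero' (g := fun n => s' n - s' (n+1) + α n * Bu)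
          (Eventually.of_forall hqq0)
          (eventually_atTop.mpr ⟨1, fun n hn => by
            show qq n ≤ s' n - s' (n+1) + α n * Bu
            linarith [hI1 n hn, hs'n n, hs'n (n+1)]⟩)
        have := hdiff0.add (hα0.mul_const Bu)
        simpa using this
      have httz : Tendsto tt atTop (nhds 0) := by
        have h4 : Tendsto (fun m => c₀ * (tt m)^2) atTop (nhds 0) := by
          apply squeeze_zero' (Eventually.of_forall (fun m =>
            mul_nonneg (le_of_lt hc₀0) (sq_nonneg _)))
          · filter_upwards [hαsmall, hβsmall] with n h1 h2
            exact httsq n (le_of_lt h1) (le_of_lt h2)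
          · simpa using hqqt.const_mul 4
        have h5 : Tendsto (fun m => (tt m)^2) atTop (nhds 0) := by
          have := h4.const_mul (1/c₀)
          have hne : c₀ ≠ 0 := ne_of_gt hc₀0
          simp only [← mul_assoc, one_div, inv_mul_cancel₀ hne, one_mul, mul_zero] at this
          exact this
        have h6 := (Real.continuous_sqrt.tendsto 0).comp h5
        have h7 : ∀ m, Real.sqrt ((tt m)^2) = tt m := fun m => Real.sqrt_sq (htt0 _)
        simpa [Function.comp_def, h7] using h6
      have hccsmall : ∀ ε > 0, ∀ᶠ n in atTop, cc n + r n ≤ ε := by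
        intro ε hε
        have hWapp := hW (fun k => x (k+1)) (fun k => hxC (k+1) (Nat.le_add_left _ _))
          (fun k => hxnorm (k+1) (Nat.le_add_left _ _))
          ((tendsto_add_atTop_iff_nat 1).mpr httz) (ε/4) (by positivity)
        have hr2 : ∀ᶠ n in atTop, r n < ε/2 :=
          hrtend.eventually (gt_mem_nhds (by positivity))
        filter_upwards [hWapp, hr2] with n h1 h2
        have hccn : cc n = 2 * ⟪u - p, x (n+1) - p⟫ := rfl
        rw [hccn]
        linarith
      apply xu_lemma s' (fun n => cc n + r n) α hs'0 (fun n => (hα n).1)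
        (fun n => le_of_lt (hα n).2) hαdiv
        (eventually_atTop.mpr ⟨1, fun n hn => by
          show s' (n+1) ≤ (1 - α n) * s' n + α n * (cc n + r n)
          rw [hs'n (n+1), hs'n n]
          exact hI2 n hn⟩)
        hccsmall
    · -- Case 2 : Maingé's argument
      push_neg at hcase
      obtain ⟨N₂, hN₂⟩ := (hαsmall.and hβsmall).exists_forall_of_atTop
      obtain ⟨n₀, hn₀ge, hn₀P⟩ := hcase (max N₂ 1)
      have hn₀1 : 1 ≤ n₀ := le_trans (le_max_right _ _) hn₀ge
      have hn₀N₂ : N₂ ≤ n₀ := le_trans (le_max_left _ _) hn₀ge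
      classical
      set Pp : ℕ → Prop := fun k => s' k < s' (k+1) with hPpdef
      have hn₀Pp : Pp n₀ := hn₀P
      set τ : ℕ → ℕ := fun n => Nat.findGreatest Pp n with hτdef
      have hτP : ∀ n, n₀ ≤ n → Pp (τ n) := fun n hn => Nat.findGreatest_spec hn hn₀Pp
      have hτge : ∀ n, n₀ ≤ n → n₀ ≤ τ n := fun n hn => Nat.le_findGreatest hn hn₀Pp
      have hτle : ∀ n, τ n ≤ n := fun n => Nat.findGreatest_le n
      have hτ1 : ∀ n, n₀ ≤ n → 1 ≤ τ n := fun n hn => le_trans hn₀1 (hτge n hn)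
      have hτbound : ∀ n, n₀ ≤ n → s' n ≤ s' (τ n + 1) := by
        intro n hn
        have hchain : ∀ j, τ n + 1 ≤ j → j ≤ n → s' j ≤ s' (τ n + 1) := by
          intro j hj1
          induction j, hj1 using Nat.le_induction with
          | base => intro _; exact le_rfl
          | succ j hj ih =>
            intro hjn
            have hjn' : j ≤ n := le_trans (Nat.le_succ j) hjn
            have hτn : τ n = Nat.findGreatest Pp n := rfl
            have hnot : ¬ Pp j :=
              Nat.findGreatest_is_greatest (by rw [← hτn]; omega) hjn'
            have : s' (j+1) ≤ s' j := not_lt.mp hnot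
            exact le_trans this (ih hjn')
        rcases eq_or_lt_of_le (hτle n) with heq | hlt
        · have hx := hτP n hn
          rw [heq] at hx
          rw [heq]
          exact le_of_lt hx
        · exact hchain n (by omega) le_rfl
      have hτtend : Tendsto τ atTop atTop := by
        rw [tendsto_atTop_atTop]
        intro b
        obtain ⟨k, hkb, hkP⟩ := hcase (max b n₀)
        have hkP' : Pp k := hkP
        refine ⟨k, fun a ha => ?_⟩
        have h1 := Nat.le_findGreatest ha hkP'
        have hτa : τ a = Nat.findGreatest Pp a := rfl
        have hbk : b ≤ k := le_trans (le_max_left _ _) hkb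
        omega
      set στ : ℕ → ℕ := fun m => τ (m + n₀) with hστdef
      have hστ1 : ∀ m, 1 ≤ στ m := fun m => hτ1 _ (Nat.le_add_left _ _)
      have hστN₂ : ∀ m, N₂ ≤ στ m := fun m =>
        le_trans hn₀N₂ (hτge _ (Nat.le_add_left _ _))
      have hστP : ∀ m, Pp (στ m) := fun m => hτP _ (Nat.le_add_left _ _)
      have hστtend : Tendsto στ atTop atTop :=
        hτtend.comp (tendsto_add_atTop_nat n₀)
      have hατ : Tendsto (fun m => α (στ m)) atTop (nhds 0) := hα0.comp hστtend
      have hβτ : Tendsto (fun m => β (στ m)) atTop (nhds 0) := hβ0.comp hστtend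
      have hrτ : Tendsto (fun m => r (στ m)) atTop (nhds 0) := hrtend.comp hστtend
      -- qq along στ
      have hqqτb : ∀ m, qq (στ m) ≤ α (στ m) * Bu := by
        intro m
        have h1 := hI1 (στ m) (hστ1 m)
        have h2 : s' (στ m) < s' (στ m + 1) := hστP m
        have h3 := hs'n (στ m)
        have h4 := hs'n (στ m + 1)
        linarith
      have hqqτ : Tendsto (fun m => qq (στ m)) atTop (nhds 0) := by
        apply squeeze_zero (fun m => hqq0 _) hqqτb
        simpa using hατ.mul_const Bu
      have httτ : Tendsto (fun m => tt (στ m)) atTop (nhds 0) :=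
        httof στ (fun m => le_of_lt (hN₂ _ (hστN₂ m)).1)
          (fun m => le_of_lt (hN₂ _ (hστN₂ m)).2) hqqτ
      -- s'(στ m + 1) ≤ cc (στ m) + r (στ m)
      have hkey2 : ∀ m, s' (στ m + 1) ≤ cc (στ m) + r (στ m) := by
        intro m
        have h1 := hI2 (στ m) (hστ1 m)
        have h2 : s' (στ m) < s' (στ m + 1) := hστP m
        have h3 := hs'n (στ m)
        have h4 := hs'n (στ m + 1)
        have hα1 := (hα (στ m)).1
        have hα2 := (hα (στ m)).2
        have hmul : α (στ m) * s' (στ m + 1) ≤ α (στ m) * (cc (στ m) + r (στ m)) := by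
          nlinarith
        exact le_of_mul_le_mul_left hmul hα1
      -- cc (στ m) → small
      have hdiffτ : Tendsto (fun m => ‖x (στ m + 1) - x (στ m)‖) atTop (nhds 0) := by
        apply squeeze_zero (fun m => norm_nonneg _)
          (fun m => hdiffb (στ m) (hστ1 m))
        have h1 := (hατ.mul_const (‖u‖ + B0)).add
          ((hβτ.mul_const (2*R)).add httτ)
        simpa [add_assoc] using h1
      have hccsmall2 : ∀ ε > 0, ∀ᶠ m in atTop, cc (στ m) + r (στ m) ≤ ε := by
        intro ε hε
        have hWapp := hW (fun m => x (στ m)) (fun m => hxC _ (hστ1 m))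
          (fun m => hxnorm _ (hστ1 m)) httτ (ε/8) (by positivity)
        have hip2 : Tendsto (fun m => 2 * ‖u - p‖ * ‖x (στ m + 1) - x (στ m)‖)
            atTop (nhds 0) := by
          simpa using hdiffτ.const_mul (2 * ‖u - p‖)
        have hip3 : ∀ᶠ m in atTop, 2 * ‖u - p‖ * ‖x (στ m + 1) - x (στ m)‖ < ε/4 :=
          hip2.eventually (gt_mem_nhds (by positivity))
        have hr3 : ∀ᶠ m in atTop, r (στ m) < ε/2 :=
          hrτ.eventually (gt_mem_nhds (by positivity))
        filter_upwards [hWapp, hip3, hr3] with m h1 h2 h3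
        have hccn : cc (στ m) = 2 * ⟪u - p, x (στ m + 1) - p⟫ := rfl
        have hsplit : ⟪u - p, x (στ m + 1) - p⟫
            = ⟪u - p, x (στ m) - p⟫ + ⟪u - p, x (στ m + 1) - x (στ m)⟫ := by
          rw [← inner_add_right]
          congr 1
          abel
        have hcs : ⟪u - p, x (στ m + 1) - x (στ m)⟫
            ≤ ‖u - p‖ * ‖x (στ m + 1) - x (στ m)‖ := real_inner_le_norm _ _
        rw [hccn, hsplit]
        linarith
      -- conclude s' → 0
      apply tendsto_zero_of_ev s' hs'0
      intro ε hε
      obtain ⟨M, hM⟩ := (hccsmall2 ε hε).exists_forall_of_atTop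
      rw [eventually_atTop]
      refine ⟨M + n₀, fun n hn => ?_⟩
      have hnn₀ : n₀ ≤ n := by omega
      have h1 : s' n ≤ s' (τ n + 1) := hτbound n hnn₀
      have h2 : τ n = στ (n - n₀) := by
        rw [hστdef]
        simp only
        congr 1
        omega
      have h3 : M ≤ n - n₀ := by omega
      have h4 := hM (n - n₀) h3
      have h5 := hkey2 (n - n₀)
      rw [h2] at h1
      linarith
  exact ⟨p, hpF.1, hpF.2, (fun y hy hSy => hpdist y ⟨hy, hSy⟩), hfinish hs'tend⟩
end

section
/- Main theorem (i): Under the standing assumptions, if Σ(1−βₙ) < ∞, then the sequence x_{n+1} = αₙu + (1−αₙ)[βₙA_Txₙ + (1−βₙ)A_Sxₙ] converges strongly to a point p ∈ Fix(T). -/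
open Filter Topology

local notation "⟪" x ", " y "⟫" => @inner ℝ _ _ x y

section Aux

variable {H : Type*} [NormedAddCommGroup H] [InnerProductSpace ℝ H]

lemma combo_sq (a b : H) (t : ℝ) :
    ‖(1 - t) • a + t • b‖ ^ 2
      = (1 - t) * ‖a‖ ^ 2 + t * ‖b‖ ^ 2 - t * (1 - t) * ‖a - b‖ ^ 2 := by
  have h1 : ‖(1 - t) • a + t • b‖ ^ 2 =
      ‖(1 - t) • a‖ ^ 2 + 2 * ⟪(1 - t) • a, t • b⟫ + ‖t • b‖ ^ 2 := norm_add_sq_real _ _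
  have h2 : ‖a - b‖ ^ 2 = ‖a‖ ^ 2 - 2 * ⟪a, b⟫ + ‖b‖ ^ 2 := norm_sub_sq_real a b
  have h3 : ‖(1 - t) • a‖ ^ 2 = (1 - t) ^ 2 * ‖a‖ ^ 2 := by
    rw [norm_smul, mul_pow, Real.norm_eq_abs, sq_abs]
  have h4 : ‖t • b‖ ^ 2 = t ^ 2 * ‖b‖ ^ 2 := by
    rw [norm_smul, mul_pow, Real.norm_eq_abs, sq_abs]
  have h5 : ⟪(1 - t) • a, t • b⟫ = (1 - t) * t * ⟪a, b⟫ := by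
    rw [real_inner_smul_left, real_inner_smul_right]; ring
  rw [h1, h3, h4, h5]
  linear_combination (t * (1 - t)) * h2

set_option maxHeartbeats 1000000 in
lemma weak_cluster [CompleteSpace H] (x : ℕ → H) (B : ℝ) (hB : ∀ n, ‖x n‖ ≤ B)
    (l : Filter ℕ) [l.NeBot] :
    ∃ z : H, ∀ y : H, MapClusterPt (⟪z, y⟫ : ℝ) l (fun n => (⟪x n, y⟫ : ℝ)) := by
  set D : ℕ → WeakDual ℝ H :=
    fun n => StrongDual.toWeakDual (InnerProductSpace.toDual ℝ H (x n)) with hD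
  have hmem : ∀ n, D n ∈ WeakDual.toStrongDual ⁻¹' Metric.closedBall 0 B := by
    intro n
    simp only [Set.mem_preimage, Metric.mem_closedBall, dist_zero_right]
    have : ‖WeakDual.toStrongDual (D n)‖ = ‖x n‖ := by
      simp [hD]
    rw [this]; exact hB n
  have hle : Filter.map D l ≤ 𝓟 (WeakDual.toStrongDual ⁻¹' Metric.closedBall 0 B) := by
    rw [Filter.le_principal_iff]
    exact Filter.mem_map.mpr (Filter.Eventually.of_forall hmem)
  obtain ⟨φ, -, hφ⟩ :=
    (WeakDual.isCompact_closedBall (𝕜 := ℝ) (E := H) 0 B).exists_mapClusterPt hle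
  refine ⟨(InnerProductSpace.toDual ℝ H).symm (WeakDual.toStrongDual φ), fun y => ?_⟩
  have h1 : MapClusterPt (φ y) l ((fun ψ : WeakDual ℝ H => ψ y) ∘ D) :=
    hφ.continuousAt_comp (WeakDual.eval_continuous y).continuousAt
  have h2 : ((fun ψ : WeakDual ℝ H => ψ y) ∘ D) = fun n => (⟪x n, y⟫ : ℝ) := by
    funext n
    simp only [hD, Function.comp_apply]
    exact InnerProductSpace.toDual_apply_apply
  have h3 : (⟪(InnerProductSpace.toDual ℝ H).symm (WeakDual.toStrongDual φ), y⟫ : ℝ) = φ y := by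
    rw [InnerProductSpace.toDual_symm_apply]
    rfl
  rw [h3, ← h2]
  exact h1

lemma xu_lemma_s19 (a b α : ℕ → ℝ) (hα : ∀ n, α n ∈ Set.Ioo (0:ℝ) 1)
    (hαdiv : Tendsto (fun N => ∑ n ∈ Finset.range N, α n) atTop atTop)
    (ha0 : ∀ n, 0 ≤ a n)
    (hrec : ∀ n, a (n+1) ≤ (1 - α n) * a n + α n * b n)
    (hb : ∀ ε > 0, ∀ᶠ n in atTop, b n ≤ ε) :
    Tendsto a atTop (𝓝 0) := by
  rw [NormedAddCommGroup.tendsto_nhds_zero]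
  intro ε hε
  obtain ⟨N, hN⟩ := (eventually_atTop.mp (hb (ε/3) (by linarith)))
  have hprod_pos : ∀ n, 0 < ∏ k ∈ Finset.Ico N n, (1 - α k) := by
    intro n
    exact Finset.prod_pos fun k _ => by have := (hα k).2; linarith
  have key : ∀ n, N ≤ n → a n ≤ ε/3 + a N * ∏ k ∈ Finset.Ico N n, (1 - α k) := by
    intro n hn
    induction n, hn using Nat.le_induction with
    | base => simp; linarith [ha0 N]
    | succ n hn ih =>
      have h1 : a (n+1) ≤ (1 - α n) * a n + α n * b n := hrec n
      have h2 : b n ≤ ε/3 := hN n hn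
      have h3 : ∏ k ∈ Finset.Ico N (n+1), (1 - α k)
          = (∏ k ∈ Finset.Ico N n, (1 - α k)) * (1 - α n) := Finset.prod_Ico_succ_top hn _
      have hα1 := (hα n).1
      have hα2 := (hα n).2
      have hp := (hprod_pos n).le
      rw [h3]
      nlinarith [ha0 N]
  have hexp : ∀ n, N ≤ n → ∏ k ∈ Finset.Ico N n, (1 - α k)
      ≤ Real.exp ((∑ k ∈ Finset.range N, α k) - ∑ k ∈ Finset.range n, α k) := by
    intro n hn
    have h1 : ∏ k ∈ Finset.Ico N n, (1 - α k) ≤ ∏ k ∈ Finset.Ico N n, Real.exp (-(α k)) := by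
      refine Finset.prod_le_prod (fun k _ => by have := (hα k).2; linarith) ?_
      intro k _
      have := Real.add_one_le_exp (-(α k))
      linarith
    have h2 : ∏ k ∈ Finset.Ico N n, Real.exp (-(α k))
        = Real.exp (∑ k ∈ Finset.Ico N n, -(α k)) := (Real.exp_sum _ _).symm
    have h3 : ∑ k ∈ Finset.Ico N n, -(α k) =
        (∑ k ∈ Finset.range N, α k) - ∑ k ∈ Finset.range n, α k := by
      rw [Finset.sum_neg_distrib, Finset.sum_Ico_eq_sub _ hn]
      ring
    rw [h2, h3] at h1
    exact h1
  have hlim : Tendsto (fun n => Real.exp ((∑ k ∈ Finset.range N, α k)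
      - ∑ k ∈ Finset.range n, α k)) atTop (𝓝 0) := by
    apply Real.tendsto_exp_atBot.comp
    apply tendsto_atBot_add_const_left
    exact (tendsto_neg_atBot_iff.mpr hαdiv)
  have hsmall : ∀ᶠ n in atTop, Real.exp ((∑ k ∈ Finset.range N, α k)
      - ∑ k ∈ Finset.range n, α k) < ε/(3*(a N + 1)) := by
    have hpos : 0 < ε/(3*(a N + 1)) := by
      have := ha0 N; positivity
    exact (hlim.eventually (eventually_lt_nhds hpos)).mono (fun n h => by simpa using h)
  filter_upwards [hsmall, eventually_ge_atTop N] with n h1 h2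
  have h3 := key n h2
  have h4 := hexp n h2
  have h5 : a N * ∏ k ∈ Finset.Ico N n, (1 - α k) ≤ (a N + 1) * (ε/(3*(a N + 1))) := by
    have hp := (hprod_pos n).le
    have haN := ha0 N
    have := h4.trans h1.le
    nlinarith
  have h6 : (a N + 1) * (ε/(3*(a N + 1))) = ε/3 := by
    have := ha0 N
    field_simp
  rw [Real.norm_eq_abs, abs_of_nonneg (ha0 n)]
  nlinarith [ha0 n]

end Aux

set_option maxHeartbeats 4000000 in
theorem stmt_19 {H : Type*} [NormedAddCommGroup H] [InnerProductSpace ℝ H] [CompleteSpace H]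
    (C : Set H) (hC : C.Nonempty) (hCc : IsClosed C) (hCv : Convex ℝ C)
    (T S : H → H) (hT : Set.MapsTo T C C) (hS : Set.MapsTo S C C)
    (hne : ∀ x ∈ C, ∀ y ∈ C, ‖T x - T y‖ ≤ ‖x - y‖)
    (hns : ∀ x ∈ C, ∀ y ∈ C, 2 * ‖S x - S y‖ ^ 2 ≤ ‖S x - y‖ ^ 2 + ‖x - S y‖ ^ 2)
    (hFix : ∃ z ∈ C, T z = z ∧ S z = z)
    (δ : ℝ) (hδ : δ ∈ Set.Ioo (0 : ℝ) 1)
    (AT AS : H → H)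
    (hAT : ∀ x, AT x = (1 - δ) • x + δ • T x)
    (hAS : ∀ x, AS x = (1 - δ) • x + δ • S x)
    (u : H) (hu : u ∈ C)
    (α β : ℕ → ℝ) (hα : ∀ n, α n ∈ Set.Ioo (0 : ℝ) 1) (hβ : ∀ n, β n ∈ Set.Icc (0 : ℝ) 1)
    (hα0 : Filter.Tendsto α Filter.atTop (nhds 0))
    (hαdiv : Filter.Tendsto (fun N => ∑ n ∈ Finset.range N, α n) Filter.atTop Filter.atTop)
    (hβsum : Summable (fun n => 1 - β n))
    (x : ℕ → H) (hx1 : x 1 ∈ C)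
    (hrec : ∀ n ≥ 1, x (n + 1) =
      α n • u + (1 - α n) • (β n • AT (x n) + (1 - β n) • AS (x n))) :
    ∃ p, p ∈ C ∧ T p = p ∧ Filter.Tendsto x Filter.atTop (nhds p) := by
  classical
  obtain ⟨hδ0, hδ1⟩ := hδ
  obtain ⟨z₀, hz₀C, hz₀T, hz₀S⟩ := hFix
  -- reindexed sequences
  set α' : ℕ → ℝ := fun n => α (n+1) with hα'def
  set β' : ℕ → ℝ := fun n => β (n+1) with hβ'def
  set X : ℕ → H := fun n => x (n+1) with hXdef
  set Y : ℕ → H := fun n => β' n • AT (X n) + (1 - β' n) • AS (X n) with hYdef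
  have hXrec : ∀ n, X (n+1) = α' n • u + (1 - α' n) • Y n :=
    fun n => hrec (n+1) (Nat.le_add_left 1 n)
  have hα'0 : Tendsto α' atTop (𝓝 0) := hα0.comp (tendsto_add_atTop_nat 1)
  have hα'div : Tendsto (fun N => ∑ n ∈ Finset.range N, α' n) atTop atTop := by
    have h1 : Tendsto (fun N => (∑ n ∈ Finset.range (N+1), α n) + (- α 0)) atTop atTop :=
      tendsto_atTop_add_const_right _ _ (hαdiv.comp (tendsto_add_atTop_nat 1))
    refine h1.congr (fun N => ?_)
    rw [Finset.sum_range_succ']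
    simp [hα'def]
  have hβ'sum : Summable (fun n => 1 - β' n) :=
    (summable_nat_add_iff 1).2 hβsum
  have hβ'0 : Tendsto (fun n => 1 - β' n) atTop (𝓝 0) := hβ'sum.tendsto_atTop_zero
  have hα' : ∀ n, α' n ∈ Set.Ioo (0:ℝ) 1 := fun n => hα (n+1)
  have hβ'i : ∀ n, β' n ∈ Set.Icc (0:ℝ) 1 := fun n => hβ (n+1)
  -- helper
  have htri : ∀ a b c : H, ‖a - c‖ ≤ ‖a - b‖ + ‖b - c‖ := by
    intro a b c
    rw [← sub_add_sub_cancel a b c]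
    exact norm_add_le _ _
  have hcombo_mem : ∀ (t : ℝ) (a b : H), a ∈ C → b ∈ C → 0 ≤ t → t ≤ 1 →
      t • a + (1 - t) • b ∈ C :=
    fun t a b ha hb h0 h1 => hCv ha hb h0 (by linarith) (by ring)
  have hcombo_norm : ∀ (t : ℝ) (a b c : H), 0 ≤ t → t ≤ 1 →
      ‖t • a + (1 - t) • b - c‖ ≤ t * ‖a - c‖ + (1 - t) * ‖b - c‖ := by
    intro t a b c h0 h1
    have he : t • a + (1 - t) • b - c = t • (a - c) + (1 - t) • (b - c) := by module
    rw [he]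
    refine (norm_add_le _ _).trans ?_
    rw [norm_smul, norm_smul, Real.norm_eq_abs, Real.norm_eq_abs,
      abs_of_nonneg h0, abs_of_nonneg (by linarith)]
  -- quasi-nonexpansiveness at z₀
  have hTz₀ : ∀ w ∈ C, ‖T w - z₀‖ ≤ ‖w - z₀‖ := fun w hw => by
    have := hne w hw z₀ hz₀C; rwa [hz₀T] at this
  have hSz₀ : ∀ w ∈ C, ‖S w - z₀‖ ≤ ‖w - z₀‖ := by
    intro w hw
    have h := hns w hw z₀ hz₀C
    rw [hz₀S] at h
    nlinarith [norm_nonneg (S w - z₀), norm_nonneg (w - z₀)]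
  have hATmem : ∀ w ∈ C, AT w ∈ C := fun w hw => by
    rw [hAT]; exact hCv hw (hT hw) (by linarith) hδ0.le (by ring)
  have hASmem : ∀ w ∈ C, AS w ∈ C := fun w hw => by
    rw [hAS]; exact hCv hw (hS hw) (by linarith) hδ0.le (by ring)
  have hATz₀ : ∀ w ∈ C, ‖AT w - z₀‖ ≤ ‖w - z₀‖ := by
    intro w hw
    rw [hAT]
    have he : (1 - δ) • w + δ • T w - z₀ = (1 - δ) • (w - z₀) + δ • (T w - z₀) := by module
    rw [he]
    have h2 : ‖(1 - δ) • (w - z₀) + δ • (T w - z₀)‖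
        ≤ (1-δ) * ‖w - z₀‖ + δ * ‖T w - z₀‖ := by
      refine (norm_add_le _ _).trans ?_
      rw [norm_smul, norm_smul, Real.norm_eq_abs, Real.norm_eq_abs,
        abs_of_nonneg (by linarith), abs_of_nonneg hδ0.le]
    nlinarith [hTz₀ w hw]
  have hASz₀ : ∀ w ∈ C, ‖AS w - z₀‖ ≤ ‖w - z₀‖ := by
    intro w hw
    rw [hAS]
    have he : (1 - δ) • w + δ • S w - z₀ = (1 - δ) • (w - z₀) + δ • (S w - z₀) := by module
    rw [he]
    have h2 : ‖(1 - δ) • (w - z₀) + δ • (S w - z₀)‖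
        ≤ (1-δ) * ‖w - z₀‖ + δ * ‖S w - z₀‖ := by
      refine (norm_add_le _ _).trans ?_
      rw [norm_smul, norm_smul, Real.norm_eq_abs, Real.norm_eq_abs,
        abs_of_nonneg (by linarith), abs_of_nonneg hδ0.le]
    nlinarith [hSz₀ w hw]
  -- boundedness
  set R : ℝ := max ‖x 1 - z₀‖ ‖u - z₀‖ with hRdef
  have hR0 : 0 ≤ R := le_trans (norm_nonneg _) (le_max_left _ _)
  have huR : ‖u - z₀‖ ≤ R := le_max_right _ _
  have hXCR : ∀ n, X n ∈ C ∧ ‖X n - z₀‖ ≤ R := by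
    intro n
    induction n with
    | zero => exact ⟨hx1, le_max_left _ _⟩
    | succ n ih =>
      obtain ⟨hC1, hR1⟩ := ih
      have hATC := hATmem _ hC1
      have hASC := hASmem _ hC1
      have hβ1 := (hβ'i n).1
      have hβ2 := (hβ'i n).2
      have hα1 := (hα' n).1
      have hα2 := (hα' n).2
      have hYC : Y n ∈ C := hcombo_mem _ _ _ hATC hASC hβ1 hβ2
      have hYR : ‖Y n - z₀‖ ≤ R := by
        have h1 := hcombo_norm (β' n) (AT (X n)) (AS (X n)) z₀ hβ1 hβ2
        have hA := le_trans (hATz₀ _ hC1) hR1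
        have hB := le_trans (hASz₀ _ hC1) hR1
        nlinarith
      constructor
      · rw [hXrec n]; exact hcombo_mem _ _ _ hu hYC hα1.le hα2.le
      · rw [hXrec n]
        have h1 := hcombo_norm (α' n) u (Y n) z₀ hα1.le hα2.le
        nlinarith
  have hYCR : ∀ n, Y n ∈ C ∧ ‖Y n - z₀‖ ≤ R := by
    intro n
    obtain ⟨hC1, hR1⟩ := hXCR n
    have hβ1 := (hβ'i n).1
    have hβ2 := (hβ'i n).2
    refine ⟨hcombo_mem _ _ _ (hATmem _ hC1) (hASmem _ hC1) hβ1 hβ2, ?_⟩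
    have h1 := hcombo_norm (β' n) (AT (X n)) (AS (X n)) z₀ hβ1 hβ2
    have hA := le_trans (hATz₀ _ hC1) hR1
    have hB := le_trans (hASz₀ _ hC1) hR1
    nlinarith
  -- the fixed point set of T in C and the projection of u
  set F : Set H := {w | w ∈ C ∧ T w = w} with hFdef
  have hFz₀ : z₀ ∈ F := ⟨hz₀C, hz₀T⟩
  have hFconv : Convex ℝ F := by
    intro w₁ hw₁ w₂ hw₂ sc tc hsc htc hst
    have hwC : sc • w₁ + tc • w₂ ∈ C := hCv hw₁.1 hw₂.1 hsc htc hst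
    refine ⟨hwC, ?_⟩
    obtain rfl : sc = 1 - tc := by linarith
    set Tw := T ((1 - tc) • w₁ + tc • w₂) with hTwdef
    have h1 : ‖Tw - w₁‖ ≤ ‖(1 - tc) • w₁ + tc • w₂ - w₁‖ := by
      have := hne _ hwC _ hw₁.1; rwa [hw₁.2] at this
    have h2 : ‖Tw - w₂‖ ≤ ‖(1 - tc) • w₁ + tc • w₂ - w₂‖ := by
      have := hne _ hwC _ hw₂.1; rwa [hw₂.2] at this
    have e1 : (1 - tc) • w₁ + tc • w₂ - w₁ = tc • (w₂ - w₁) := by module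
    have e2 : (1 - tc) • w₁ + tc • w₂ - w₂ = (1 - tc) • (w₁ - w₂) := by module
    rw [e1, norm_smul, Real.norm_eq_abs, abs_of_nonneg htc] at h1
    rw [e2, norm_smul, Real.norm_eq_abs, abs_of_nonneg hsc] at h2
    have h2' : ‖Tw - w₂‖ ≤ (1 - tc) * ‖w₂ - w₁‖ := by
      rwa [norm_sub_rev w₁ w₂] at h2
    have e0 : Tw - ((1 - tc) • w₁ + tc • w₂) = (1 - tc) • (Tw - w₁) + tc • (Tw - w₂) := by
      module
    have hcs := combo_sq (Tw - w₁) (Tw - w₂) tc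
    have e3 : (Tw - w₁) - (Tw - w₂) = w₂ - w₁ := by abel
    have h4 : ‖Tw - ((1 - tc) • w₁ + tc • w₂)‖^2 ≤ 0 := by
      rw [e0, hcs, e3]
      nlinarith [h1, h2', norm_nonneg (Tw - w₁), norm_nonneg (Tw - w₂),
        norm_nonneg (w₂ - w₁), mul_nonneg htc hsc,
        mul_self_le_mul_self (norm_nonneg (Tw - w₁)) h1,
        mul_self_le_mul_self (norm_nonneg (Tw - w₂)) h2']
    have h5 : ‖Tw - ((1 - tc) • w₁ + tc • w₂)‖^2 = 0 :=
      le_antisymm h4 (sq_nonneg _)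
    have h6 : Tw - ((1 - tc) • w₁ + tc • w₂) = 0 := by
      rw [pow_eq_zero_iff (two_ne_zero)] at h5
      exact norm_eq_zero.mp h5
    exact sub_eq_zero.mp h6
  have hFclosed : IsClosed F := by
    refine IsSeqClosed.isClosed ?_
    intro w q hw hq
    have hqC : q ∈ C := hCc.isSeqClosed (fun n => (hw n).1) hq
    refine ⟨hqC, ?_⟩
    have hlim : Tendsto (fun n => (2:ℝ) * ‖w n - q‖) atTop (𝓝 0) := by
      have h := tendsto_iff_norm_sub_tendsto_zero.mp hq
      simpa using h.const_mul 2
    have hb : ∀ n, ‖T q - q‖ ≤ 2 * ‖w n - q‖ := by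
      intro n
      have h1 : ‖T q - T (w n)‖ ≤ ‖q - w n‖ := hne q hqC (w n) (hw n).1
      rw [(hw n).2] at h1
      have h2 := htri (T q) (w n) q
      rw [norm_sub_rev q (w n)] at h1
      linarith
    have h7 : ‖T q - q‖ ≤ 0 := ge_of_tendsto hlim (Eventually.of_forall hb)
    have h8 : ‖T q - q‖ = 0 := le_antisymm h7 (norm_nonneg _)
    exact sub_eq_zero.mp (norm_eq_zero.mp h8)
  have hFne : F.Nonempty := ⟨z₀, hFz₀⟩
  obtain ⟨p, hpF, hp_inf⟩ :=
    exists_norm_eq_iInf_of_complete_convex hFne hFclosed.isComplete hFconv u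
  have hproj : ∀ w ∈ F, (⟪u - p, w - p⟫:ℝ) ≤ 0 :=
    (norm_eq_iInf_iff_real_inner_le_zero hFconv hpF).1 hp_inf
  obtain ⟨hpC, hpT⟩ := hpF
  -- constants
  set M : ℝ := R + ‖z₀ - p‖ with hMdef
  have hM0 : 0 ≤ M := add_nonneg hR0 (norm_nonneg _)
  have hXp : ∀ n, ‖X n - p‖ ≤ M := by
    intro n
    have h1 := htri (X n) z₀ p
    have h2 := (hXCR n).2
    simp only [hMdef]; linarith
  set Bx : ℝ := R + ‖z₀‖ with hBxdef
  have hBx0 : 0 ≤ Bx := add_nonneg hR0 (norm_nonneg _)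
  have hXB : ∀ n, ‖X n‖ ≤ Bx := by
    intro n
    have h1 : ‖X n‖ ≤ ‖X n - z₀‖ + ‖z₀‖ := by
      have := norm_add_le (X n - z₀) z₀
      simpa using this
    have h2 := (hXCR n).2
    simp only [hBxdef]; linarith
  -- scalar sequences
  set sv : ℕ → ℝ := fun n => ‖X n - AT (X n)‖^2 with hsvdef
  set av : ℕ → ℝ := fun n => ‖X n - p‖^2 with havdef
  set bv : ℕ → ℝ := fun n => 2 * ⟪u - p, X (n+1) - p⟫ with hbvdef
  have hsv0 : ∀ n, 0 ≤ sv n := fun n => sq_nonneg _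
  have hav0 : ∀ n, 0 ≤ av n := fun n => sq_nonneg _
  set C₀ : ℝ := 4*R*M + 4*R^2 with hC₀def
  have hC₀0 : 0 ≤ C₀ := by
    simp only [hC₀def]
    nlinarith [hR0, hM0]
  set γ : ℕ → ℝ := fun n => C₀ * (1 - β' n) with hγdef
  have hγ0 : ∀ n, 0 ≤ γ n := by
    intro n
    have := (hβ'i n).2
    exact mul_nonneg hC₀0 (by linarith)
  have hγsum : Summable γ := hβ'sum.mul_left C₀
  set tw : ℕ → ℝ := fun n => ∑' k, γ (k + n) with htwdef
  have htw0 : Tendsto tw atTop (𝓝 0) := tendsto_sum_nat_add γ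
  have htw_nonneg : ∀ n, 0 ≤ tw n := fun n => tsum_nonneg (fun k => hγ0 _)
  have htw_rec : ∀ n, tw n = γ n + tw (n+1) := by
    intro n
    have hs : Summable (fun k => γ (k + n)) := (summable_nat_add_iff n).2 hγsum
    have h1 := Summable.tsum_eq_zero_add hs
    simp only [htwdef]
    rw [h1]
    congr 1
    · simp
    · exact tsum_congr (fun k => by congr 1; omega)
  have htw_le : ∀ n, tw n ≤ tw 0 := by
    intro n
    have h1 := Summable.sum_add_tsum_nat_add (f := γ) n hγsum
    have h2 : tw 0 = ∑' i, γ i := tsum_congr (fun k => by simp)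
    have h3 : 0 ≤ ∑ i ∈ Finset.range n, γ i := Finset.sum_nonneg (fun i _ => hγ0 i)
    simp only [htwdef] at *
    linarith
  set κ : ℝ := (1 - δ)/δ with hκdef
  have hκ : 0 < κ := div_pos (by linarith) hδ0
  have hs_eq : ∀ n, X n - AT (X n) = δ • (X n - T (X n)) := fun n => by rw [hAT]; module
  have hsvTe : ∀ n, sv n = δ^2 * ‖X n - T (X n)‖^2 := by
    intro n
    simp only [hsvdef]
    rw [hs_eq n, norm_smul, mul_pow, Real.norm_eq_abs, sq_abs]
  have hsq_norm : ∀ n, Real.sqrt (sv n) = δ * ‖X n - T (X n)‖ := by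
    intro n
    have h1 : sv n = (δ * ‖X n - T (X n)‖)^2 := by rw [hsvTe n]; ring
    rw [h1, Real.sqrt_sq (by positivity)]
  have hsq_norm' : ∀ n, Real.sqrt (sv n) = ‖X n - AT (X n)‖ := by
    intro n
    simp only [hsvdef]
    exact Real.sqrt_sq (norm_nonneg _)
  -- the one-step inequality
  have hmain : ∀ n, av (n+1) ≤ (1 - α' n) * av n + α' n * bv n
      - ((1 - α' n) * κ) * sv n + γ n := by
    intro n
    obtain ⟨hXnC, hXnR⟩ := hXCR n
    have hα1 := (hα' n).1
    have hα2 := (hα' n).2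
    have hβ1 := (hβ'i n).1
    have hβ2 := (hβ'i n).2
    -- (i) averaged operator inequality
    have eAT : AT (X n) - p = (1 - δ) • (X n - p) + δ • (T (X n) - p) := by rw [hAT]; module
    have hTle : ‖T (X n) - p‖ ≤ ‖X n - p‖ := by
      have := hne (X n) hXnC p hpC; rwa [hpT] at this
    have hκsv : κ * sv n = δ*(1-δ)*‖X n - T (X n)‖^2 := by
      rw [hsvTe n]
      simp only [hκdef]
      field_simp
    have hATp : ‖AT (X n) - p‖^2 ≤ av n - κ * sv n := by
      have hcs := combo_sq (X n - p) (T (X n) - p) δ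
      have e2 : (X n - p) - (T (X n) - p) = X n - T (X n) := by abel
      rw [e2] at hcs
      rw [eAT, hcs, hκsv]
      simp only [havdef]
      have hB2 : ‖T (X n) - p‖^2 ≤ ‖X n - p‖^2 := by
        nlinarith [hTle, norm_nonneg (T (X n) - p), norm_nonneg (X n - p)]
      linarith [mul_le_mul_of_nonneg_left hB2 hδ0.le]
    -- (ii) the perturbed midpoint
    have eY : Y n - p = (AT (X n) - p) + (1 - β' n) • (AS (X n) - AT (X n)) := by
      simp only [hYdef]; module
    have hee : ‖(1 - β' n) • (AS (X n) - AT (X n))‖ ≤ (1 - β' n) * (2*R) := by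
      rw [norm_smul, Real.norm_eq_abs, abs_of_nonneg (by linarith : (0:ℝ) ≤ 1 - β' n)]
      have h1 : ‖AS (X n) - AT (X n)‖ ≤ 2*R := by
        have hA := le_trans (hASz₀ _ hXnC) hXnR
        have hB := le_trans (hATz₀ _ hXnC) hXnR
        have h2 := htri (AS (X n)) z₀ (AT (X n))
        rw [norm_sub_rev z₀ (AT (X n))] at h2
        linarith
      exact mul_le_mul_of_nonneg_left h1 (by linarith)
    have hATpM : ‖AT (X n) - p‖ ≤ M := by
      have h1 := htri (AT (X n)) z₀ p
      have h2 := le_trans (hATz₀ _ hXnC) hXnR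
      simp only [hMdef]; linarith
    have hYp : ‖Y n - p‖^2 ≤ av n - κ * sv n + γ n := by
      have hexp := norm_add_sq_real (AT (X n) - p) ((1 - β' n) • (AS (X n) - AT (X n)))
      have hip := real_inner_le_norm (AT (X n) - p) ((1 - β' n) • (AS (X n) - AT (X n)))
      have h0e : 0 ≤ ‖(1 - β' n) • (AS (X n) - AT (X n))‖ := norm_nonneg _
      have h0A : 0 ≤ ‖AT (X n) - p‖ := norm_nonneg _
      rw [eY, hexp]
      have hprod : ‖AT (X n) - p‖ * ‖(1 - β' n) • (AS (X n) - AT (X n))‖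
          ≤ M * ((1 - β' n) * (2*R)) := mul_le_mul hATpM hee h0e hM0
      have hsq2 : ‖(1 - β' n) • (AS (X n) - AT (X n))‖^2 ≤ ((1 - β' n) * (2*R))^2 := by
        nlinarith
      have hb2 : ((1 - β' n) * (2*R))^2 ≤ 4*R^2*(1 - β' n) := by
        nlinarith [mul_nonneg (mul_nonneg (sq_nonneg R) hβ1)
          (show (0:ℝ) ≤ 1 - β' n by linarith)]
      have hip2 : ⟪AT (X n) - p, (1 - β' n) • (AS (X n) - AT (X n))⟫
          ≤ M * ((1 - β' n) * (2*R)) := le_trans hip hprod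
      simp only [hγdef, hC₀def]
      linarith [hATp, hsq2, hb2, hip2]
    -- (iii) combine with the convex combination with u
    have eX : X (n+1) - p = α' n • (u - p) + (1 - α' n) • (Y n - p) := by
      rw [hXrec n]; module
    have h1 : ‖α' n • (u - p)‖^2 = (α' n)^2 * ‖u - p‖^2 := by
      rw [norm_smul, mul_pow, Real.norm_eq_abs, sq_abs]
    have h2 : ‖(1 - α' n) • (Y n - p)‖^2 = (1 - α' n)^2 * ‖Y n - p‖^2 := by
      rw [norm_smul, mul_pow, Real.norm_eq_abs, sq_abs]
    have h3 : ⟪α' n • (u - p), (1 - α' n) • (Y n - p)⟫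
        = α' n * (1 - α' n) * ⟪u - p, Y n - p⟫ := by
      rw [real_inner_smul_left, real_inner_smul_right]; ring
    have hXa : av (n+1) = (α' n)^2 * ‖u - p‖^2
        + 2*(α' n * (1 - α' n))*⟪u - p, Y n - p⟫ + (1 - α' n)^2 * ‖Y n - p‖^2 := by
      simp only [havdef]
      rw [eX, norm_add_sq_real, h1, h2, h3]
      ring
    have hbn : bv n = 2*(α' n)*‖u - p‖^2 + 2*(1 - α' n)*⟪u - p, Y n - p⟫ := by
      simp only [hbvdef]
      rw [eX, inner_add_right, real_inner_smul_right, real_inner_smul_right,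
        real_inner_self_eq_norm_sq]
      ring
    rw [hXa, hbn]
    have h1α : (0:ℝ) ≤ 1 - α' n := by linarith
    linarith [mul_le_mul_of_nonneg_left hYp h1α,
      mul_nonneg (mul_nonneg hα1.le h1α) (sq_nonneg ‖Y n - p‖),
      mul_nonneg hα1.le (hγ0 n),
      mul_nonneg (mul_nonneg hα1.le hα1.le) (sq_nonneg ‖u - p‖)]
  -- tilde sequences
  set ta : ℕ → ℝ := fun n => av n + tw n with htadef
  set tb : ℕ → ℝ := fun n => bv n + tw n with htbdef
  have hta0 : ∀ n, 0 ≤ ta n := fun n => add_nonneg (hav0 n) (htw_nonneg n)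
  have hbvM : ∀ n, bv n ≤ 2*‖u - p‖*M := by
    intro n
    have h1 := real_inner_le_norm (u - p) (X (n+1) - p)
    have h2 := hXp (n+1)
    have h3 : ‖u - p‖ * ‖X (n+1) - p‖ ≤ ‖u - p‖ * M :=
      mul_le_mul_of_nonneg_left h2 (norm_nonneg _)
    simp only [hbvdef]
    linarith
  set CC : ℝ := 2*‖u - p‖*M + tw 0 with hCCdef
  have htbCC : ∀ n, tb n ≤ CC := by
    intro n
    have := hbvM n
    have := htw_le n
    simp only [htbdef, hCCdef]
    linarith
  clear_value α' β' X Y R M Bx sv av bv C₀ γ tw κ ta tb CC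
  have hmain2 : ∀ n, ta (n+1) ≤ (1 - α' n) * ta n + α' n * tb n - ((1 - α' n) * κ) * sv n := by
    intro n
    have h1 := hmain n
    have h2 := htw_rec n
    simp only [htadef, htbdef]
    linarith [h1, h2]
  -- KEY: weak-cluster-point argument
  have hKEY : ∀ (l : Filter ℕ), l.NeBot →
      Tendsto (fun n => ‖X n - T (X n)‖) l (𝓝 0) →
      ∀ ε > 0, ∀ᶠ n in l, (⟪u - p, X n - p⟫:ℝ) ≤ ε := by
    intro l hl hTX ε hε
    by_contra hcon
    rw [Filter.not_eventually] at hcon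
    have hcon' : ∃ᶠ n in l, n ∈ {m | ε < ⟪u - p, X m - p⟫} :=
      hcon.mono (fun n h => not_le.mp h)
    have hne' : (l ⊓ 𝓟 {m | ε < ⟪u - p, X m - p⟫}).NeBot :=
      Filter.frequently_iff_neBot.mp hcon'
    set l' := l ⊓ 𝓟 {m | ε < ⟪u - p, X m - p⟫} with hl'def
    haveI := hne'
    obtain ⟨z, hz⟩ := weak_cluster X Bx hXB l'
    have hTX' : Tendsto (fun n => ‖X n - T (X n)‖) l' (𝓝 0) := hTX.mono_left inf_le_left
    have hzC : z ∈ C := by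
      by_contra hzc
      obtain ⟨f, c, hf1, hf2⟩ := geometric_hahn_banach_closed_point hCv hCc hzc
      set w := (InnerProductSpace.toDual ℝ H).symm f with hwdef
      have hfw : ∀ v : H, (⟪v, w⟫:ℝ) = f v := by
        intro v
        rw [real_inner_comm]
        exact InnerProductSpace.toDual_symm_apply
      have hzw : c < (⟪z, w⟫:ℝ) := by rw [hfw z]; exact hf2
      have hclus := (mapClusterPt_iff_frequently.mp (hz w)) (Set.Ioi c) (Ioi_mem_nhds hzw)
      obtain ⟨n, hn⟩ := hclus.exists
      have h1 : f (X n) < c := hf1 (X n) (hXCR n).1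
      rw [← hfw (X n)] at h1
      exact absurd hn (by simpa using h1.le.not_gt)
    have hzT : T z = z := by
      set Mz : ℝ := Bx + ‖z‖ with hMzdef
      have hMz0 : 0 ≤ Mz := add_nonneg hBx0 (norm_nonneg _)
      have hMz : ∀ n, ‖X n - z‖ ≤ Mz := by
        intro n
        have := norm_sub_le (X n) z
        have := hXB n
        simp only [hMzdef]; linarith
      have hv2 : ‖z - T z‖^2 ≤ 0 := by
        refine le_of_forall_pos_le_add ?_
        intro η hη
        have hpos : (0:ℝ) < min 1 (η/(2*(2*Mz+1))) := by positivity
        have hev : ∀ᶠ n in l', ‖X n - T (X n)‖ < min 1 (η/(2*(2*Mz+1))) :=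
          hTX'.eventually (eventually_lt_nhds hpos)
        have hfreq := (mapClusterPt_iff_frequently.mp (hz (z - T z)))
          (Set.Ioi ((⟪z, z - T z⟫:ℝ) - η/4)) (Ioi_mem_nhds (by linarith))
        obtain ⟨n, hn1, hn2⟩ := (hfreq.and_eventually hev).exists
        have hn1' : (⟪z, z - T z⟫:ℝ) - η/4 < ⟪X n, z - T z⟫ := hn1
        have he1 : ‖X n - T (X n)‖ ≤ 1 := le_of_lt (lt_of_lt_of_le hn2 (min_le_left _ _))
        have hee : ‖X n - T (X n)‖ ≤ η/(2*(2*Mz+1)) :=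
          le_of_lt (lt_of_lt_of_le hn2 (min_le_right _ _))
        have hXnC := (hXCR n).1
        have hnexp : ‖T (X n) - T z‖ ≤ ‖X n - z‖ := hne _ hXnC _ hzC
        have hexp1 : ‖X n - T z‖^2 = ‖X n - z‖^2 + 2*⟪X n - z, z - T z⟫ + ‖z - T z‖^2 := by
          have h := norm_add_sq_real (X n - z) (z - T z)
          have e : (X n - z) + (z - T z) = X n - T z := by abel
          rw [e] at h; exact h
        have hexp2 : ‖X n - T z‖ ≤ ‖X n - T (X n)‖ + ‖X n - z‖ := by
          have h := htri (X n) (T (X n)) (T z)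
          linarith
        have hnn1 : 0 ≤ ‖X n - z‖ := norm_nonneg _
        have hnn2 : 0 ≤ ‖X n - T (X n)‖ := norm_nonneg _
        have hb1 : ‖X n - T z‖^2 ≤ (‖X n - T (X n)‖ + ‖X n - z‖)^2 := by
          nlinarith [norm_nonneg (X n - T z)]
        have hip : (⟪X n - z, z - T z⟫:ℝ) = ⟪X n, z - T z⟫ - ⟪z, z - T z⟫ :=
          inner_sub_left _ _ _
        have hstep : ‖X n - T (X n)‖^2 + 2*‖X n - T (X n)‖*‖X n - z‖ ≤ η/2 := by
          have hMzn := hMz n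
          have hq : ‖X n - T (X n)‖ * (2*(2*Mz+1)) ≤ η := by
            have h2 : (0:ℝ) < 2*(2*Mz+1) := by linarith
            calc ‖X n - T (X n)‖ * (2*(2*Mz+1)) ≤ (η/(2*(2*Mz+1))) * (2*(2*Mz+1)) :=
                  mul_le_mul_of_nonneg_right hee (by linarith)
              _ = η := by field_simp
          linarith [hq, mul_le_mul_of_nonneg_left hMzn hnn2,
            mul_le_mul_of_nonneg_left he1 hnn2]
        nlinarith [hexp1, hb1, hstep, hn1', hip]
      have h5 : ‖z - T z‖^2 = 0 := le_antisymm hv2 (sq_nonneg _)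
      have h6 : z - T z = 0 := by
        rw [pow_eq_zero_iff (two_ne_zero)] at h5
        exact norm_eq_zero.mp h5
      exact (sub_eq_zero.mp h6).symm
    have hzF : z ∈ F := ⟨hzC, hzT⟩
    have hzp := hproj z hzF
    have hgap : (0:ℝ) < ε - ⟪u - p, z - p⟫ := by linarith
    have hfreq := (mapClusterPt_iff_frequently.mp (hz (u - p)))
      (Set.Iio ((⟪z, u - p⟫:ℝ) + (ε - ⟪u - p, z - p⟫))) (Iio_mem_nhds (by linarith))
    have hev' : ∀ᶠ n in l', ε < ⟪u - p, X n - p⟫ := by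
      have h := (inf_le_right : l' ≤ 𝓟 {m | ε < ⟪u - p, X m - p⟫})
      exact h (Filter.mem_principal_self _)
    obtain ⟨n, hn1, hn2⟩ := (hfreq.and_eventually hev').exists
    have hn1' : (⟪X n, u - p⟫:ℝ) < ⟪z, u - p⟫ + (ε - ⟪u - p, z - p⟫) := hn1
    have e1 : (⟪u - p, X n - p⟫:ℝ) = ⟪X n, u - p⟫ - ⟪p, u - p⟫ := by
      rw [real_inner_comm (X n - p) (u - p), inner_sub_left]
    have e2 : (⟪u - p, z - p⟫:ℝ) = ⟪z, u - p⟫ - ⟪p, u - p⟫ := by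
      rw [real_inner_comm (z - p) (u - p), inner_sub_left]
    rw [e1] at hn2
    linarith
  -- eventual smallness of tb along filters where sv → 0
  have hbt : ∀ (l : Filter ℕ), l.NeBot → l ≤ atTop → Tendsto sv l (𝓝 0) →
      ∀ ε > 0, ∀ᶠ n in l, tb n ≤ ε := by
    intro l hl hle hsvl ε hε
    haveI := hl
    have hTX : Tendsto (fun n => ‖X n - T (X n)‖) l (𝓝 0) := by
      have h1 : Tendsto (fun n => Real.sqrt (sv n) / δ) l (𝓝 0) := by
        have h2 : Tendsto (fun n => Real.sqrt (sv n)) l (𝓝 0) := by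
          have := (Real.continuous_sqrt.tendsto' 0 0 (by simp)).comp hsvl
          exact this
        simpa using h2.div_const δ
      refine h1.congr (fun n => ?_)
      rw [hsq_norm n]
      field_simp
    have hKEY' := hKEY l hl hTX (ε/6) (by linarith)
    -- bound on consecutive differences
    set Mu : ℝ := ‖u - z₀‖ + R with hMudef
    have hXd : ∀ n, ‖X (n+1) - X n‖ ≤ α' n * Mu + Real.sqrt (sv n) + 2*R*(1 - β' n) := by
      intro n
      have e : X (n+1) - X n = α' n • (u - Y n) + (Y n - X n) := by
        rw [hXrec n]; module
      have h1 : ‖u - Y n‖ ≤ Mu := by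
        have h2 := htri u z₀ (Y n)
        have h3 := (hYCR n).2
        rw [norm_sub_rev z₀ (Y n)] at h2
        simp only [hMudef]; linarith
      have eY' : Y n - X n = (AT (X n) - X n) + (1 - β' n) • (AS (X n) - AT (X n)) := by
        simp only [hYdef]; module
      have h4 : ‖AS (X n) - AT (X n)‖ ≤ 2*R := by
        obtain ⟨hXnC, hXnR⟩ := hXCR n
        have hA := le_trans (hASz₀ _ hXnC) hXnR
        have hB := le_trans (hATz₀ _ hXnC) hXnR
        have h2 := htri (AS (X n)) z₀ (AT (X n))
        rw [norm_sub_rev z₀ (AT (X n))] at h2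
        linarith
      have h5 : ‖Y n - X n‖ ≤ Real.sqrt (sv n) + 2*R*(1 - β' n) := by
        rw [eY']
        refine (norm_add_le _ _).trans ?_
        have h6 : ‖AT (X n) - X n‖ = Real.sqrt (sv n) := by
          rw [hsq_norm' n, norm_sub_rev]
        have h7 : ‖(1 - β' n) • (AS (X n) - AT (X n))‖ ≤ (1 - β' n) * (2*R) := by
          rw [norm_smul, Real.norm_eq_abs,
            abs_of_nonneg (by linarith [(hβ'i n).2] : (0:ℝ) ≤ 1 - β' n)]
          exact mul_le_mul_of_nonneg_left h4 (by linarith [(hβ'i n).2])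
        rw [h6]
        linarith
      rw [e]
      refine (norm_add_le _ _).trans ?_
      rw [norm_smul, Real.norm_eq_abs, abs_of_nonneg (hα' n).1.le]
      have := mul_le_mul_of_nonneg_left h1 (hα' n).1.le
      linarith
    have hXdlim : Tendsto (fun n => ‖X (n+1) - X n‖) l (𝓝 0) := by
      have hα'l : Tendsto α' l (𝓝 0) := hα'0.mono_left hle
      have hβ'l : Tendsto (fun n => 1 - β' n) l (𝓝 0) := hβ'0.mono_left hle
      have hsql : Tendsto (fun n => Real.sqrt (sv n)) l (𝓝 0) := by
        have := (Real.continuous_sqrt.tendsto' 0 0 (by simp)).comp hsvl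
        exact this
      have hbig : Tendsto (fun n => α' n * Mu + Real.sqrt (sv n) + 2*R*(1 - β' n)) l (𝓝 0) := by
        have h1 := (hα'l.mul_const Mu).add hsql
        have h2 := h1.add (hβ'l.const_mul (2*R))
        simpa [mul_comm] using h2
      refine squeeze_zero' (Eventually.of_forall (fun n => norm_nonneg _))
        (Eventually.of_forall hXd) hbig
    have hbv_ev : ∀ᶠ n in l, bv n ≤ ε/3 + 2*‖u - p‖*‖X (n+1) - X n‖ := by
      filter_upwards [hKEY'] with n hn
      have e : X (n+1) - p = (X n - p) + (X (n+1) - X n) := by abel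
      have h1 : (⟪u - p, X (n+1) - p⟫:ℝ)
          = ⟪u - p, X n - p⟫ + ⟪u - p, X (n+1) - X n⟫ := by
        rw [e, inner_add_right]
      have h2 := real_inner_le_norm (u - p) (X (n+1) - X n)
      simp only [hbvdef]
      rw [h1]
      linarith
    have hcor : Tendsto (fun n => 2*‖u - p‖*‖X (n+1) - X n‖) l (𝓝 0) := by
      have := hXdlim.const_mul (2*‖u - p‖)
      simpa using this
    have hcor_ev : ∀ᶠ n in l, 2*‖u - p‖*‖X (n+1) - X n‖ ≤ ε/3 :=
      hcor.eventually (eventually_le_nhds (by linarith))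
    have htw_ev : ∀ᶠ n in l, tw n ≤ ε/3 :=
      (htw0.mono_left hle).eventually (eventually_le_nhds (by linarith))
    filter_upwards [hbv_ev, hcor_ev, htw_ev] with n h1 h2 h3
    simp only [htbdef]
    linarith
  -- main dichotomy
  have hta_lim : Tendsto ta atTop (𝓝 0) := by
    by_cases hcase : ∃ᶠ n in atTop, ta n < ta (n+1)
    · -- Case B: Maingé's argument
      have hEne : (atTop ⊓ 𝓟 {n | ta n < ta (n+1)}).NeBot :=
        Filter.frequently_iff_neBot.mp hcase
      set lE := atTop ⊓ 𝓟 {n | ta n < ta (n+1)} with hlEdef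
      haveI := hEne
      have hlEle : lE ≤ atTop := inf_le_left
      have hmemE : ∀ᶠ n in lE, ta n < ta (n+1) :=
        (inf_le_right : lE ≤ 𝓟 _) (Filter.mem_principal_self _)
      have hα'lE : Tendsto α' lE (𝓝 0) := hα'0.mono_left hlEle
      have honE : ∀ n, ta n < ta (n+1) →
          ((1 - α' n) * κ) * sv n ≤ α' n * (CC - ta n) ∧ ta n ≤ tb n := by
        intro n hn
        have h1 := hmain2 n
        have hα1 := (hα' n).1
        have hα2 := (hα' n).2
        have hκn : 0 ≤ ((1 - α' n) * κ) * sv n :=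
          mul_nonneg (mul_nonneg (by linarith) hκ.le) (hsv0 n)
        constructor
        · linarith [mul_le_mul_of_nonneg_left (htbCC n) hα1.le,
            mul_nonneg hα1.le (hta0 n)]
        · by_contra hcon
          push_neg at hcon
          linarith [mul_pos hα1 (sub_pos.mpr hcon)]
      have hsvE : Tendsto sv lE (𝓝 0) := by
        have hevhalf : ∀ᶠ n in lE, α' n ≤ 1/2 :=
          hα'lE.eventually (eventually_le_nhds (by norm_num))
        have hbound : ∀ᶠ n in lE, sv n ≤ (2/κ) * (α' n * CC) := by
          filter_upwards [hmemE, hevhalf] with n hn hhalf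
          obtain ⟨h1, h2⟩ := honE n hn
          have hα1 := (hα' n).1
          have h3 : κ/2 * sv n ≤ α' n * CC := by
            linarith [h1, mul_nonneg hα1.le (hta0 n),
              mul_nonneg (mul_nonneg hκ.le (hsv0 n)) (by linarith : (0:ℝ) ≤ 1/2 - α' n)]
          have h4 : (2/κ) * (κ/2 * sv n) = sv n := by
            field_simp
          have h5 := mul_le_mul_of_nonneg_left h3 (by positivity : (0:ℝ) ≤ 2/κ)
          rw [h4] at h5
          exact h5
        have hcov : Tendsto (fun n => (2/κ) * (α' n * CC)) lE (𝓝 0) := by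
          have := (hα'lE.mul_const CC).const_mul (2/κ)
          simpa using this
        exact squeeze_zero' (Eventually.of_forall hsv0) hbound hcov
      have htbE := hbt lE inferInstance hlEle hsvE
      have htaE : Tendsto ta lE (𝓝 0) := by
        rw [NormedAddCommGroup.tendsto_nhds_zero]
        intro ε hε
        filter_upwards [htbE (ε/2) (by linarith), hmemE] with n h1 h2
        have h3 := (honE n h2).2
        rw [Real.norm_eq_abs, abs_of_nonneg (hta0 n)]
        exact lt_of_le_of_lt (h3.trans h1) (by linarith)
      have hta1E : Tendsto (fun n => ta (n+1)) lE (𝓝 0) := by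
        have hup : ∀ᶠ n in lE, ta (n+1) ≤ ta n + α' n * CC := by
          filter_upwards [] with n
          have h1 := hmain2 n
          have hα1 := (hα' n).1
          have hα2 := (hα' n).2
          have hκn : 0 ≤ ((1 - α' n) * κ) * sv n :=
            mul_nonneg (mul_nonneg (by linarith) hκ.le) (hsv0 n)
          linarith [mul_le_mul_of_nonneg_left (htbCC n) hα1.le,
            mul_nonneg hα1.le (hta0 n)]
        have hcov : Tendsto (fun n => ta n + α' n * CC) lE (𝓝 0) := by
          have := htaE.add (hα'lE.mul_const CC)
          simpa using this
        exact squeeze_zero' (Eventually.of_forall (fun n => hta0 _)) hup hcov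
      obtain ⟨n₀, hn₀E⟩ := hcase.exists
      set E : Set ℕ := {n | ta n < ta (n+1)} with hEdef
      set τ : ℕ → ℕ :=
        fun n => (insert n₀ ((Finset.Icc n₀ n).filter (fun k => k ∈ E))).max'
          (Finset.insert_nonempty _ _) with hτdef
      have hτmem : ∀ n, τ n ∈ insert n₀ ((Finset.Icc n₀ n).filter (fun k => k ∈ E)) :=
        fun n => Finset.max'_mem _ _
      have hτE : ∀ n, τ n ∈ E := by
        intro n
        rcases Finset.mem_insert.mp (hτmem n) with h | h
        · rw [h]; exact hn₀E
        · exact (Finset.mem_filter.mp h).2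
      have hτn₀ : ∀ n, n₀ ≤ τ n := fun n => Finset.le_max' _ _ (Finset.mem_insert_self _ _)
      have hτle : ∀ n, n₀ ≤ n → τ n ≤ n := by
        intro n hn
        refine Finset.max'_le _ _ _ ?_
        intro k hk
        rcases Finset.mem_insert.mp hk with h | h
        · omega
        · exact (Finset.mem_Icc.mp (Finset.mem_filter.mp h).1).2
      have hτmax : ∀ n k, k ∈ E → n₀ ≤ k → k ≤ n → k ≤ τ n := by
        intro n k hkE h1 h2
        exact Finset.le_max' _ _
          (Finset.mem_insert_of_mem (Finset.mem_filter.mpr ⟨Finset.mem_Icc.mpr ⟨h1, h2⟩, hkE⟩))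
      have hτtop : Tendsto τ atTop atTop := by
        rw [tendsto_atTop]
        intro b
        obtain ⟨m, hm1, hm2⟩ := (Filter.frequently_atTop.mp hcase) (max b n₀)
        filter_upwards [eventually_ge_atTop m] with n hn
        have hmE : m ∈ E := hm2
        have hA := hτmax n m hmE (le_trans (le_max_right _ _) hm1) hn
        have hB := le_trans (le_max_left b n₀) hm1
        omega
      have hdesc : ∀ n, n₀ ≤ n → ta n ≤ ta (τ n + 1) := by
        intro n hn
        have hτn := hτn₀ n
        rcases eq_or_lt_of_le (hτle n hn) with heq | hlt
        · have h1 : ta (τ n) < ta (τ n + 1) := hτE n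
          rw [heq] at h1 ⊢
          exact h1.le
        · have key : ∀ j, τ n + 1 ≤ j → j ≤ n → ta j ≤ ta (τ n + 1) := by
            intro j hj1
            induction j, hj1 using Nat.le_induction with
            | base => intro _; exact le_refl _
            | succ j hj ih =>
              intro hj2
              have hjn : j ≤ n := by omega
              have hjE : j ∉ E := by
                intro hjE'
                have := hτmax n j hjE' (by omega) hjn
                omega
              have h2 : ¬ (ta j < ta (j+1)) := hjE
              exact le_trans (not_lt.mp h2) (ih hjn)
          exact key n (by omega) (le_refl n)
      have hτlE : Tendsto τ atTop lE := by
        rw [hlEdef, tendsto_inf]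
        exact ⟨hτtop, tendsto_principal.mpr (Eventually.of_forall hτE)⟩
      have hcomp : Tendsto (fun n => ta (τ n + 1)) atTop (𝓝 0) := hta1E.comp hτlE
      refine squeeze_zero' (Eventually.of_forall hta0) ?_ hcomp
      filter_upwards [eventually_ge_atTop n₀] with n hn
      exact hdesc n hn
    · -- Case A: eventually decreasing
      have hdec : ∀ᶠ n in atTop, ta (n+1) ≤ ta n :=
        (Filter.not_frequently.mp hcase).mono (fun n h => not_lt.mp h)
      obtain ⟨N, hN⟩ := eventually_atTop.mp hdec
      have hanti : Antitone (fun k => ta (N + k)) := by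
        refine antitone_nat_of_succ_le (fun k => ?_)
        have h1 := hN (N + k) (by omega)
        have h2 : N + (k+1) = (N + k) + 1 := by omega
        rw [h2]
        exact h1
      have hbdd : BddBelow (Set.range fun k => ta (N + k)) :=
        ⟨0, fun y ⟨k, hk⟩ => hk ▸ hta0 _⟩
      have hconv' : Tendsto (fun k => ta (N + k)) atTop (𝓝 (⨅ k, ta (N + k))) :=
        tendsto_atTop_ciInf hanti hbdd
      have hconv : Tendsto ta atTop (𝓝 (⨅ k, ta (N + k))) := by
        have h1 : Tendsto (fun k => ta (k + N)) atTop (𝓝 (⨅ k, ta (N + k))) :=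
          hconv'.congr (fun k => by rw [Nat.add_comm])
        exact (tendsto_add_atTop_iff_nat N).mp h1
      have hconv1 : Tendsto (fun n => ta (n+1)) atTop (𝓝 (⨅ k, ta (N + k))) :=
        (tendsto_add_atTop_iff_nat 1).mpr hconv
      have hdiff : Tendsto (fun n => ta n - ta (n+1)) atTop (𝓝 0) := by
        have := hconv.sub hconv1
        simpa using this
      have hsvA : Tendsto sv atTop (𝓝 0) := by
        have hevhalf : ∀ᶠ n in atTop, α' n ≤ 1/2 :=
          hα'0.eventually (eventually_le_nhds (by norm_num))
        have hbound : ∀ᶠ n in atTop, sv n ≤ (2/κ) * ((ta n - ta (n+1)) + α' n * CC) := by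
          filter_upwards [hevhalf] with n hhalf
          have h1 := hmain2 n
          have hα1 := (hα' n).1
          have hα2 := (hα' n).2
          have h3 : κ/2 * sv n ≤ (ta n - ta (n+1)) + α' n * CC := by
            linarith [h1, mul_le_mul_of_nonneg_left (htbCC n) hα1.le,
              mul_nonneg hα1.le (hta0 n),
              mul_nonneg (mul_nonneg hκ.le (hsv0 n)) (by linarith : (0:ℝ) ≤ 1/2 - α' n)]
          have h4 : (2/κ) * (κ/2 * sv n) = sv n := by
            field_simp
          have h5 := mul_le_mul_of_nonneg_left h3 (by positivity : (0:ℝ) ≤ 2/κ)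
          rw [h4] at h5
          exact h5
        have hcov : Tendsto (fun n => (2/κ) * ((ta n - ta (n+1)) + α' n * CC)) atTop (𝓝 0) := by
          have := (hdiff.add (hα'0.mul_const CC)).const_mul (2/κ)
          simpa using this
        exact squeeze_zero' (Eventually.of_forall hsv0) hbound hcov
      have htbA := hbt atTop inferInstance le_rfl hsvA
      refine xu_lemma_s19 ta tb α' hα' hα'div hta0 ?_ htbA
      intro n
      have h1 := hmain2 n
      have hα1 := (hα' n).1
      have hα2 := (hα' n).2
      have hκn : 0 ≤ ((1 - α' n) * κ) * sv n :=
        mul_nonneg (mul_nonneg (by linarith) hκ.le) (hsv0 n)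
      linarith
  -- conclude
  have hav_lim : Tendsto av atTop (𝓝 0) := by
    have h0 : Tendsto (fun n => ta n - tw n) atTop (𝓝 0) := by
      simpa using hta_lim.sub htw0
    refine h0.congr (fun n => ?_)
    simp only [htadef]
    ring
  have hXlim : Tendsto X atTop (𝓝 p) := by
    rw [tendsto_iff_norm_sub_tendsto_zero]
    have h1 : Tendsto (fun n => Real.sqrt (av n)) atTop (𝓝 0) := by
      have := (Real.continuous_sqrt.tendsto' 0 0 (by simp)).comp hav_lim
      exact this
    refine h1.congr (fun n => ?_)
    simp only [havdef]
    exact Real.sqrt_sq (norm_nonneg _)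
  refine ⟨p, hpC, hpT, ?_⟩
  rw [hXdef] at hXlim
  exact (tendsto_add_atTop_iff_nat 1).mp hXlim
end
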